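/- arXiv:0812.4699 — 6 statements merged into one kernel-verified Lean document; each statement's English description precedes it below -/
import Mathlib

section
/- Let n, K ≥ 1 and let B : ℝ → M_{n×K}(ℝ) be a matrix-valued function differentiable at t₀ with derivative Ḃ = B'(t₀), and suppose B(t₀)ᵀ B(t₀) is invertible. Then the projection-matrix-valued function P(t) = B(t) (B(t)ᵀ B(t))^{-1} B(t)ᵀ is differentiable at t₀ with derivative P'(t₀) = (I − P(t₀)) Ḃ M B(t₀)ᵀ + B(t₀) M Ḃᵀ (I − P(t₀)), where M = (B(t₀)ᵀ B(t₀))^{-1} and I is the n×n identity matrix. -/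
open Matrix

private lemma hasDerivAt_matMul {l m k : ℕ} {t₀ : ℝ}
    {X : ℝ → Matrix (Fin l) (Fin m) ℝ} {Y : ℝ → Matrix (Fin m) (Fin k) ℝ}
    {Xd : Matrix (Fin l) (Fin m) ℝ} {Yd : Matrix (Fin m) (Fin k) ℝ}
    (hX : ∀ i j, HasDerivAt (fun t => X t i j) (Xd i j) t₀)
    (hY : ∀ i j, HasDerivAt (fun t => Y t i j) (Yd i j) t₀) :
    ∀ i j, HasDerivAt (fun t => (X t * Y t) i j)
      ((Xd * Y t₀ + X t₀ * Yd) i j) t₀ := by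
  intro i j
  simp only [Matrix.mul_apply, Matrix.add_apply, ← Finset.sum_add_distrib]
  exact HasDerivAt.fun_sum fun c _ => (hX i c).mul (hY c j)

private lemma differentiableAt_det {m : ℕ} {t₀ : ℝ}
    {X : ℝ → Matrix (Fin m) (Fin m) ℝ}
    (hX : ∀ i j, DifferentiableAt ℝ (fun t => X t i j) t₀) :
    DifferentiableAt ℝ (fun t => (X t).det) t₀ := by
  simp only [Matrix.det_apply']
  exact DifferentiableAt.fun_sum fun σ _ =>
    ((DifferentiableAt.fun_finsetProd fun c _ => hX (σ c) c).const_mul _)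

private lemma differentiableAt_inv_entry {m : ℕ} {t₀ : ℝ}
    {X : ℝ → Matrix (Fin m) (Fin m) ℝ}
    (hX : ∀ i j, DifferentiableAt ℝ (fun t => X t i j) t₀)
    (h0 : (X t₀).det ≠ 0) :
    ∀ i j, DifferentiableAt ℝ (fun t => (X t)⁻¹ i j) t₀ := by
  intro i j
  have hdet : DifferentiableAt ℝ (fun t => (X t).det) t₀ := differentiableAt_det hX
  have hadj : DifferentiableAt ℝ (fun t => (X t).adjugate i j) t₀ := by
    simp only [Matrix.adjugate_apply]
    refine differentiableAt_det ?_
    intro a b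
    rcases eq_or_ne a j with rfl | hne
    · simp only [Matrix.updateRow_self]
      exact differentiableAt_const _
    · simp only [Matrix.updateRow_ne hne]
      exact hX a b
  have : (fun t => (X t)⁻¹ i j) = fun t => ((X t).det)⁻¹ * (X t).adjugate i j := by
    funext t
    rw [Matrix.inv_def, Matrix.smul_apply, Ring.inverse_eq_inv', smul_eq_mul]
  rw [this]
  exact (hdet.inv h0).mul hadj

/-- Derivative of the orthogonal projection matrix
`P(t) = B(t) (B(t)ᵀ B(t))⁻¹ B(t)ᵀ` (entrywise differentiability). -/
theorem projection_matrix_derivative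
    (n K : ℕ) (hn : 1 ≤ n) (hK : 1 ≤ K) (t₀ : ℝ)
    (B : ℝ → Matrix (Fin n) (Fin K) ℝ) (Bd : Matrix (Fin n) (Fin K) ℝ)
    (hB : ∀ i j, HasDerivAt (fun t => B t i j) (Bd i j) t₀)
    (hinv : IsUnit ((B t₀)ᵀ * B t₀).det)
    (M : Matrix (Fin K) (Fin K) ℝ) (hM : M = ((B t₀)ᵀ * B t₀)⁻¹)
    (P : ℝ → Matrix (Fin n) (Fin n) ℝ)
    (hP : ∀ t, P t = B t * ((B t)ᵀ * B t)⁻¹ * (B t)ᵀ)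
    (Q : Matrix (Fin n) (Fin n) ℝ) (hQ : Q = 1 - P t₀) :
    ∀ i j, HasDerivAt (fun t => P t i j)
      ((Q * Bd * M * (B t₀)ᵀ + B t₀ * M * Bdᵀ * Q) i j) t₀ := by
  set A : ℝ → Matrix (Fin K) (Fin K) ℝ := fun t => (B t)ᵀ * B t with hA
  have hBT : ∀ i j, HasDerivAt (fun t => (B t)ᵀ i j) (Bdᵀ i j) t₀ := by
    intro i j; simpa [Matrix.transpose_apply] using hB j i
  set Ad : Matrix (Fin K) (Fin K) ℝ := Bdᵀ * B t₀ + (B t₀)ᵀ * Bd with hAd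
  have hAde : ∀ i j, HasDerivAt (fun t => A t i j) (Ad i j) t₀ :=
    hasDerivAt_matMul hBT hB
  have hAdiff : ∀ i j, DifferentiableAt ℝ (fun t => A t i j) t₀ :=
    fun i j => (hAde i j).differentiableAt
  have hdet0 : (A t₀).det ≠ 0 := by
    simpa [isUnit_iff_ne_zero] using hinv
  -- N = A⁻¹ entrywise differentiable
  have hNdiff : ∀ i j, DifferentiableAt ℝ (fun t => (A t)⁻¹ i j) t₀ :=
    differentiableAt_inv_entry hAdiff hdet0
  set Nd : Matrix (Fin K) (Fin K) ℝ :=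
    Matrix.of (fun i j => deriv (fun t => (A t)⁻¹ i j) t₀) with hNd
  have hNde : ∀ i j, HasDerivAt (fun t => (A t)⁻¹ i j) (Nd i j) t₀ :=
    fun i j => (hNdiff i j).hasDerivAt
  -- determine Nd from A * A⁻¹ = 1 eventually
  have hdet_cont : ContinuousAt (fun t => (A t).det) t₀ :=
    (differentiableAt_det hAdiff).continuousAt
  have hev : ∀ᶠ t in nhds t₀, (A t).det ≠ 0 := hdet_cont.eventually_ne hdet0
  have hAN : A t₀ * Nd = -(Ad * (A t₀)⁻¹) := by
    have key : ∀ i j, (Ad * (A t₀)⁻¹ + A t₀ * Nd) i j = 0 := by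
      intro i j
      have h1 : HasDerivAt (fun t => (A t * (A t)⁻¹) i j)
          ((Ad * (A t₀)⁻¹ + A t₀ * Nd) i j) t₀ := hasDerivAt_matMul hAde hNde i j
      have heq : (fun t => (A t * (A t)⁻¹) i j) =ᶠ[nhds t₀]
          (fun _ => (1 : Matrix (Fin K) (Fin K) ℝ) i j) := by
        filter_upwards [hev] with t ht
        rw [Matrix.mul_nonsing_inv _ (isUnit_iff_ne_zero.mpr ht)]
      have h2 : HasDerivAt (fun _ : ℝ => (1 : Matrix (Fin K) (Fin K) ℝ) i j)
          ((Ad * (A t₀)⁻¹ + A t₀ * Nd) i j) t₀ := h1.congr_of_eventuallyEq heq.symm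
      exact h2.unique (hasDerivAt_const _ _)
    have : Ad * (A t₀)⁻¹ + A t₀ * Nd = 0 := by
      ext i j; exact key i j
    exact eq_neg_of_add_eq_zero_right this
  have hMA : M * A t₀ = 1 := by rw [hM]; exact Matrix.nonsing_inv_mul _ hinv
  have hNdval : Nd = -(M * Ad * M) := by
    calc Nd = (M * A t₀) * Nd := by rw [hMA, one_mul]
    _ = M * (A t₀ * Nd) := by rw [mul_assoc]
    _ = M * (-(Ad * (A t₀)⁻¹)) := by rw [hAN]
    _ = -(M * Ad * M) := by rw [hM]; noncomm_ring
  -- product rule for P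
  have hMN : (A t₀)⁻¹ = M := hM.symm
  have hBN : ∀ i j, HasDerivAt (fun t => (B t * (A t)⁻¹) i j)
      ((Bd * M + B t₀ * Nd) i j) t₀ := by
    have := hasDerivAt_matMul hB hNde
    simpa [hMN] using this
  have hfin : ∀ i j, HasDerivAt (fun t => (B t * (A t)⁻¹ * (B t)ᵀ) i j)
      (((Bd * M + B t₀ * Nd) * (B t₀)ᵀ + (B t₀ * M) * Bdᵀ) i j) t₀ := by
    have := hasDerivAt_matMul hBN hBT
    simpa [hMN] using this
  intro i j
  have hfun : (fun t => P t i j) = fun t => (B t * (A t)⁻¹ * (B t)ᵀ) i j := by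
    funext t; rw [hP t]
  rw [hfun]
  have hDeq : (Bd * M + B t₀ * Nd) * (B t₀)ᵀ + (B t₀ * M) * Bdᵀ
      = Q * Bd * M * (B t₀)ᵀ + B t₀ * M * Bdᵀ * Q := by
    rw [hNdval, hQ, hP t₀, ← hM, hAd]
    simp only [Matrix.mul_add, Matrix.add_mul, Matrix.mul_neg, Matrix.neg_mul,
      Matrix.mul_sub, Matrix.sub_mul, Matrix.mul_one, Matrix.one_mul, neg_neg,
      Matrix.mul_assoc]
    abel
  rw [← hDeq]
  exact hfin i j
end

section
/- Let d ≥ 1 be an integer, a > 0, and let μ be the uniform probability measure on the closed Euclidean ball B_a^d = {x ∈ ℝ^d : ‖x‖ ≤ a} (Lebesgue measure restricted to the ball and normalized by its volume). Then for every unit vector θ ∈ ℝ^d, the pushforward of μ under the map x ↦ ⟨x, θ⟩ is absolutely continuous with respect to Lebesgue measure on ℝ with density f_d, i.e. for every Borel set A ⊆ ℝ, μ({x : ⟨x,θ⟩ ∈ A}) = ∫_A (c_d/a)(1 − ν²/a²)^{(d−1)/2} · 1_{[−a,a]}(ν) dν. -/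
open MeasureTheory Real
open scoped RealInnerProductSpace

private lemma slice_vol' (m : ℕ) (s : ℝ) :
    volume {y : Fin m → ℝ | ∑ j, (y j) ^ 2 ≤ s} =
      if 0 ≤ s then
        ENNReal.ofReal (Real.sqrt Real.pi ^ m / Real.Gamma ((m : ℝ) / 2 + 1) * s ^ ((m : ℝ) / 2))
      else 0 := by
  split_ifs with hs
  · rcases Nat.eq_zero_or_pos m with hm | hm
    · subst hm
      rw [show {y : Fin 0 → ℝ | ∑ j, (y j) ^ 2 ≤ s} = Set.univ from by
        ext y; simpa using hs]
      rw [MeasureTheory.volume_pi, MeasureTheory.Measure.pi_univ]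
      simp [Real.Gamma_one]
    · have hmeas : MeasurableSet {y : Fin m → ℝ | ∑ j, (y j) ^ 2 ≤ s} := by
        apply measurableSet_le <;> fun_prop
      have hpre : ((MeasurableEquiv.toLp 2 (Fin m → ℝ)).symm) ⁻¹' {y : Fin m → ℝ | ∑ j, (y j) ^ 2 ≤ s}
          = Metric.closedBall (0 : EuclideanSpace ℝ (Fin m)) (Real.sqrt s) := by
        ext x
        simp only [Set.mem_preimage, Set.mem_setOf_eq, Metric.mem_closedBall, dist_zero_right,
          EuclideanSpace.norm_eq, Real.norm_eq_abs, sq_abs]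
        have : ((MeasurableEquiv.toLp 2 (Fin m → ℝ)).symm) x = fun i => x i := rfl
        rw [this]
        constructor
        · intro h; exact Real.sqrt_le_sqrt h
        · intro h; exact (Real.sqrt_le_sqrt_iff (by positivity)).mp h
      rw [← (EuclideanSpace.volume_preserving_symm_measurableEquiv_toLp (Fin m)).measure_preimage
        hmeas.nullMeasurableSet, hpre]
      have : Nonempty (Fin m) := ⟨⟨0, hm⟩⟩
      rw [EuclideanSpace.volume_closedBall]
      rw [Fintype.card_fin]
      rw [← ENNReal.ofReal_pow (Real.sqrt_nonneg _), ← ENNReal.ofReal_mul (by positivity)]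
      congr 1
      rw [mul_comm]
      congr 1
      rw [← Real.rpow_natCast (Real.sqrt s) m, Real.sqrt_eq_rpow, ← Real.rpow_mul hs]
      norm_num
      ring_nf
  · rw [show {y : Fin m → ℝ | ∑ j, (y j) ^ 2 ≤ s} = ∅ from ?_, measure_empty]
    ext y
    simp only [Set.mem_setOf_eq, Set.mem_empty_iff_false, iff_false, not_le]
    calc s < 0 := lt_of_not_ge hs
    _ ≤ ∑ j, (y j)^2 := by positivity

private lemma constB' (m : ℕ) :
    Real.Gamma ((m : ℝ) + 1 + 1) / (Real.Gamma (((m : ℝ) + 1 + 1) / 2) ^ 2 * 2 ^ (m + 1)) =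
    Real.Gamma (((m : ℝ) + 1) / 2 + 1) / (Real.sqrt Real.pi * Real.Gamma ((m : ℝ) / 2 + 1)) := by
  have h := Real.Gamma_mul_Gamma_add_half (((m : ℝ) + 1 + 1) / 2)
  rw [show (2 : ℝ) * (((m : ℝ) + 1 + 1) / 2) = (m : ℝ) + 1 + 1 by ring] at h
  rw [show ((m : ℝ) + 1 + 1) / 2 + 1 / 2 = ((m : ℝ) + 1) / 2 + 1 by ring] at h
  rw [show (1 : ℝ) - ((m : ℝ) + 1 + 1) = -((m : ℝ) + 1) by ring] at h
  rw [show ((2:ℝ)) ^ (-((m:ℝ)+1)) = ((2:ℝ) ^ (m+1))⁻¹ from by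
    rw [Real.rpow_neg (by norm_num)]
    congr 1
    rw [show ((m : ℝ) + 1) = ((m + 1 : ℕ) : ℝ) by push_cast; ring, Real.rpow_natCast]] at h
  -- h : Γ((m+2)/2) * Γ((m+1)/2 + 1) = Γ(m+2) * (2^(m+1))⁻¹ * √π
  have hg1 : 0 < Real.Gamma (((m : ℝ) + 1 + 1) / 2) := Real.Gamma_pos_of_pos (by positivity)
  have hg2 : 0 < Real.Gamma (((m : ℝ) + 1) / 2 + 1) := Real.Gamma_pos_of_pos (by positivity)
  have hg3 : 0 < Real.Gamma ((m : ℝ) / 2 + 1) := Real.Gamma_pos_of_pos (by positivity)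
  have hpi : 0 < Real.sqrt Real.pi := Real.sqrt_pos.mpr Real.pi_pos
  have h2 : (0 : ℝ) < 2 ^ (m + 1) := by positivity
  have hgg : Real.Gamma (((m : ℝ) + 1 + 1) / 2) = Real.Gamma ((m : ℝ) / 2 + 1) := by
    rw [show ((m : ℝ) + 1 + 1) / 2 = (m : ℝ) / 2 + 1 by ring]
  rw [hgg] at h ⊢
  rw [div_eq_div_iff (by positivity) (by positivity)]
  field_simp at h
  rw [show ((m:ℝ)+2)/2 = (m:ℝ)/2+1 by ring, show ((m:ℝ)+1+2)/2 = ((m:ℝ)+1)/2+1 by ring] at h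
  linear_combination (-1 : ℝ) * Real.Gamma ((m : ℝ) / 2 + 1) * h

set_option maxHeartbeats 1000000 in
/-- The pushforward of the uniform distribution on the ball `B_a^d`
under `x ↦ ⟨x, θ⟩` (θ a unit vector) has the rescaled centered Beta density `f_d`. -/
theorem pushforward_uniform_ball
    (d : ℕ) (hd : 1 ≤ d) (a : ℝ) (ha : 0 < a)
    (c : ℝ)
    (hc : c = Real.Gamma ((d : ℝ) + 1) / (Real.Gamma (((d : ℝ) + 1) / 2) ^ 2 * 2 ^ d))
    (μ : Measure (EuclideanSpace ℝ (Fin d)))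
    (hμ : μ = (volume (Metric.closedBall (0 : EuclideanSpace ℝ (Fin d)) a))⁻¹ •
        volume.restrict (Metric.closedBall (0 : EuclideanSpace ℝ (Fin d)) a))
    (θ : EuclideanSpace ℝ (Fin d)) (hθ : ‖θ‖ = 1) :
    ∀ A : Set ℝ, MeasurableSet A →
      μ {x | ⟪x, θ⟫ ∈ A} =
        ENNReal.ofReal (∫ ν in A,
          Set.indicator (Set.Icc (-a) a)
            (fun ν => c / a * (1 - ν ^ 2 / a ^ 2) ^ (((d : ℝ) - 1) / 2)) ν) := by
  intro A hA
  obtain ⟨m, rfl⟩ : ∃ m, d = m + 1 := ⟨d - 1, by omega⟩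
  -- the density function
  set g : ℝ → ℝ := Set.indicator (Set.Icc (-a) a)
      (fun ν => c / a * (1 - ν ^ 2 / a ^ 2) ^ ((((m+1 : ℕ) : ℝ) - 1) / 2)) with hg
  -- basic positivity of c
  have hc0 : 0 ≤ c := by
    rw [hc]
    have h1 := Real.Gamma_pos_of_pos (show (0:ℝ) < ((m+1 : ℕ) : ℝ) + 1 by positivity)
    have h2 := Real.Gamma_pos_of_pos (show (0:ℝ) < (((m+1 : ℕ) : ℝ) + 1)/2 by positivity)
    positivity
  -- orthonormal basis with b 0 = θ
  have hcard : Module.finrank ℝ (EuclideanSpace ℝ (Fin (m+1))) = Fintype.card (Fin (m+1)) := by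
    simp [finrank_euclideanSpace]
  have hon : Orthonormal ℝ (Set.restrict {(0 : Fin (m+1))} (fun _ => θ)) := by
    refine ⟨fun i => hθ, ?_⟩
    intro i j hij
    exact absurd (Subtype.ext (i.2.trans j.2.symm)) hij
  obtain ⟨b, hb⟩ := hon.exists_orthonormalBasis_extension_of_card_eq hcard
  have hbθ : b 0 = θ := hb 0 rfl
  have hrepr : ∀ x : EuclideanSpace ℝ (Fin (m+1)), ⟪x, θ⟫ = b.repr x 0 := fun x => by
    rw [b.repr_apply_apply, hbθ, real_inner_comm]
  set B := Metric.closedBall (0 : EuclideanSpace ℝ (Fin (m+1))) a with hB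
  have hSmeas : MeasurableSet {x : EuclideanSpace ℝ (Fin (m+1)) | ⟪x, θ⟫ ∈ A} := by
    have : Continuous fun x : EuclideanSpace ℝ (Fin (m+1)) => ⟪x, θ⟫ :=
      continuous_id.inner continuous_const
    exact this.measurable hA
  rw [hμ, Measure.smul_apply, smul_eq_mul, Measure.restrict_apply hSmeas]
  -- transfer to coordinates
  set T : Set (EuclideanSpace ℝ (Fin (m+1))) := {y | y 0 ∈ A ∧ ‖y‖ ≤ a} with hT
  have happly : Measurable fun y : EuclideanSpace ℝ (Fin (m+1)) => y 0 := by
    measurability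
  have hTmeas : MeasurableSet T := by
    have : T = {y : EuclideanSpace ℝ (Fin (m+1)) | y 0 ∈ A} ∩ Metric.closedBall 0 a := by
      ext y
      simp [hT, Metric.mem_closedBall, dist_zero_right]
    rw [this]
    exact (happly hA).inter measurableSet_closedBall
  -- rewrite the intersection as a preimage under b.repr
  have hpre : {x | ⟪x, θ⟫ ∈ A} ∩ B = b.repr ⁻¹' T := by
    ext x
    simp only [Set.mem_inter_iff, Set.mem_setOf_eq, Set.mem_preimage, hT, hB,
      Metric.mem_closedBall, dist_zero_right, hrepr x, b.repr.norm_map]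
  rw [hpre, b.measurePreserving_repr.measure_preimage hTmeas.nullMeasurableSet]
  -- to pi space
  set T' : Set (Fin (m+1) → ℝ) := {y | y 0 ∈ A ∧ ∑ i, (y i)^2 ≤ a^2} with hT'
  have hT'meas : MeasurableSet T' := by
    have : T' = {y : Fin (m+1) → ℝ | y 0 ∈ A} ∩ {y : Fin (m+1) → ℝ | ∑ i, (y i)^2 ≤ a^2} := rfl
    rw [this]
    exact ((measurable_pi_apply 0) hA).inter (measurableSet_le (by fun_prop) measurable_const)
  have h1 : volume T = volume T' := by
    rw [← (EuclideanSpace.volume_preserving_symm_measurableEquiv_toLp (Fin (m+1))).measure_preimage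
      hT'meas.nullMeasurableSet]
    congr 1
    ext x
    simp only [Set.mem_preimage, hT, hT', Set.mem_setOf_eq]
    have hx : ((MeasurableEquiv.toLp 2 (Fin (m+1) → ℝ)).symm) x = fun i => x i := rfl
    rw [hx]
    refine and_congr_right fun _ => ?_
    rw [EuclideanSpace.norm_eq]
    simp only [Real.norm_eq_abs, sq_abs]
    exact Real.sqrt_le_left ha.le
  rw [h1]
  -- split off the first coordinate
  set U : Set (ℝ × (Fin m → ℝ)) := {p | p.1 ∈ A ∧ p.1^2 + ∑ j, (p.2 j)^2 ≤ a^2} with hU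
  have hUmeas : MeasurableSet U := by
    have : U = (Prod.fst ⁻¹' A) ∩ {p : ℝ × (Fin m → ℝ) | p.1^2 + ∑ j, (p.2 j)^2 ≤ a^2} := rfl
    rw [this]
    exact (measurable_fst hA).inter (measurableSet_le (by fun_prop) measurable_const)
  have hTU : T' = (MeasurableEquiv.piFinSuccAbove (fun _ : Fin (m+1) => ℝ) 0) ⁻¹' U := by
    ext y
    simp only [hT', hU, Set.mem_setOf_eq, Set.mem_preimage,
      MeasurableEquiv.piFinSuccAbove_apply]
    rw [Fin.sum_univ_succAbove (fun i => (y i)^2) 0]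
    simp [Fin.insertNthEquiv, Fin.removeNth, Fin.tail]
  rw [hTU, (volume_preserving_piFinSuccAbove (fun _ : Fin (m+1) => ℝ) 0).measure_preimage
    hUmeas.nullMeasurableSet, Measure.volume_eq_prod, Measure.prod_apply hUmeas]
  -- compute slices
  have hslice : ∀ ν : ℝ, volume (Prod.mk ν ⁻¹' U) =
      A.indicator (fun ν => volume {z : Fin m → ℝ | ∑ j, (z j)^2 ≤ a^2 - ν^2}) ν := by
    intro ν
    by_cases hν : ν ∈ A
    · rw [Set.indicator_of_mem hν]
      congr 1
      ext z
      simp only [hU, Set.mem_preimage, Set.mem_setOf_eq, hν, true_and]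
      constructor <;> intro h <;> linarith
    · rw [Set.indicator_of_notMem hν,
        show Prod.mk ν ⁻¹' U = ∅ from by ext z; simp [hU, hν], measure_empty]
  rw [lintegral_congr hslice, lintegral_indicator hA]
  -- normalize the constant
  have hE : (((m+1 : ℕ) : ℝ) - 1) / 2 = (m : ℝ) / 2 := by push_cast; ring
  have hc' : c = Real.Gamma (((m : ℝ) + 1) / 2 + 1) /
      (Real.sqrt Real.pi * Real.Gamma ((m : ℝ) / 2 + 1)) := by
    rw [hc]
    push_cast
    exact constB' m
  -- properties of g
  have hcont : Continuous fun ν : ℝ => c / a * (1 - ν ^ 2 / a ^ 2) ^ ((((m+1 : ℕ) : ℝ) - 1) / 2) :=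
    continuous_const.mul ((Real.continuous_rpow_const (by rw [hE]; positivity)).comp
      (continuous_const.sub ((continuous_pow 2).div_const _)))
  have hgmeas : Measurable g := by
    rw [hg]
    exact hcont.measurable.indicator measurableSet_Icc
  have hgnn : ∀ ν, 0 ≤ g ν := by
    intro ν
    rw [hg]
    apply Set.indicator_nonneg
    intro x hx
    rcases Set.mem_Icc.mp hx with ⟨hx1, hx2⟩
    have hb : 0 ≤ 1 - x ^ 2 / a ^ 2 := by
      rw [sub_nonneg, div_le_one (by positivity)]
      nlinarith
    positivity
  have hgint : Integrable g := by
    rw [hg, integrable_indicator_iff measurableSet_Icc]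
    apply Measure.integrableOn_of_bounded (M := c / a) measure_Icc_lt_top.ne
    · exact hcont.aestronglyMeasurable
    · apply (ae_restrict_iff' measurableSet_Icc).mpr
      apply ae_of_all
      intro x hx
      rcases Set.mem_Icc.mp hx with ⟨hx1, hx2⟩
      have hb : 0 ≤ 1 - x ^ 2 / a ^ 2 := by
        rw [sub_nonneg, div_le_one (by positivity)]
        nlinarith
      have hb1 : 1 - x ^ 2 / a ^ 2 ≤ 1 := by
        have : 0 ≤ x ^ 2 / a ^ 2 := by positivity
        linarith
      rw [Real.norm_eq_abs, abs_of_nonneg (by positivity)]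
      have : (1 - x ^ 2 / a ^ 2) ^ ((((m+1 : ℕ) : ℝ) - 1) / 2) ≤ 1 :=
        Real.rpow_le_one hb hb1 (by rw [hE]; positivity)
      calc c / a * (1 - x ^ 2 / a ^ 2) ^ ((((m+1 : ℕ) : ℝ) - 1) / 2)
          ≤ c / a * 1 := by
            apply mul_le_mul_of_nonneg_left this (by positivity)
        _ = c / a := mul_one _
  rw [MeasureTheory.ofReal_integral_eq_lintegral_ofReal hgint.restrict
    (ae_of_all _ hgnn)]
  -- volume of the ball
  have hvolB : volume B = ENNReal.ofReal (a ^ (m+1) *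
      (Real.sqrt Real.pi ^ (m+1) / Real.Gamma (((m : ℝ) + 1) / 2 + 1))) := by
    rw [hB, EuclideanSpace.volume_closedBall, Fintype.card_fin,
      ← ENNReal.ofReal_pow ha.le, ← ENNReal.ofReal_mul (by positivity)]
    norm_num
  have hg1 : 0 < Real.Gamma (((m : ℝ) + 1) / 2 + 1) := Real.Gamma_pos_of_pos (by positivity)
  have hg3 : 0 < Real.Gamma ((m : ℝ) / 2 + 1) := Real.Gamma_pos_of_pos (by positivity)
  have hpi : 0 < Real.sqrt Real.pi := Real.sqrt_pos.mpr Real.pi_pos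
  have hvolB_ne0 : volume B ≠ 0 := by
    rw [hvolB]
    simp only [ne_eq, ENNReal.ofReal_eq_zero, not_le]
    positivity
  have hvolB_netop : volume B ≠ ⊤ := by rw [hvolB]; exact ENNReal.ofReal_ne_top
  -- pointwise identity
  have hpoint : ∀ ν : ℝ, volume {z : Fin m → ℝ | ∑ j, (z j)^2 ≤ a^2 - ν^2}
      = volume B * ENNReal.ofReal (g ν) := by
    intro ν
    rw [slice_vol']
    by_cases hν : ν ∈ Set.Icc (-a) a
    · rcases Set.mem_Icc.mp hν with ⟨hν1, hν2⟩
      have h0 : 0 ≤ a ^ 2 - ν ^ 2 := by nlinarith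
      rw [if_pos h0, hg, Set.indicator_of_mem hν, hvolB,
        ← ENNReal.ofReal_mul (by positivity)]
      congr 1
      rw [hE]
      have hbase : (1 : ℝ) - ν ^ 2 / a ^ 2 = (a ^ 2 - ν ^ 2) / a ^ 2 := by
        field_simp
      rw [hbase, Real.div_rpow h0 (by positivity)]
      have hpow : ((a : ℝ) ^ 2) ^ ((m : ℝ) / 2) = a ^ m := by
        rw [← Real.rpow_natCast a 2, ← Real.rpow_mul ha.le,
          show ((2:ℕ):ℝ) * ((m:ℝ)/2) = ((m:ℕ):ℝ) by push_cast; ring, Real.rpow_natCast]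
      rw [hpow, hc', pow_succ a m, pow_succ (Real.sqrt Real.pi) m]
      have hpne : (a : ℝ) ^ m ≠ 0 := pow_ne_zero _ ha.ne'
      generalize (a ^ 2 - ν ^ 2) ^ ((m : ℝ) / 2) = t
      generalize hq : Real.sqrt Real.pi ^ m = q
      field_simp
    · have h0 : ¬ (0 ≤ a ^ 2 - ν ^ 2) := by
        rw [Set.mem_Icc] at hν
        intro hcon
        apply hν
        constructor <;> nlinarith [sq_nonneg (ν + a), sq_nonneg (ν - a)]
      rw [if_neg h0, hg, Set.indicator_of_notMem hν, ENNReal.ofReal_zero, mul_zero]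
  calc (volume B)⁻¹ * ∫⁻ ν in A, volume {z : Fin m → ℝ | ∑ j, (z j)^2 ≤ a^2 - ν^2}
      = (volume B)⁻¹ * ∫⁻ ν in A, volume B * ENNReal.ofReal (g ν) := by
        rw [lintegral_congr fun ν => hpoint ν]
    _ = (volume B)⁻¹ * (volume B * ∫⁻ ν in A, ENNReal.ofReal (g ν)) := by
        rw [lintegral_const_mul' _ _ hvolB_netop]
    _ = ∫⁻ ν in A, ENNReal.ofReal (g ν) := by
        rw [← mul_assoc, ENNReal.inv_mul_cancel hvolB_ne0 hvolB_netop, one_mul]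
end

section
/- Let d ≥ 1 be an integer, a > 0, 0 < c_f ≤ C_f, and let X be a random vector in ℝ^d whose law has a Lebesgue density f satisfying f(x) = 0 for ‖x‖ > a and c_f/V ≤ f(x) ≤ C_f/V for ‖x‖ ≤ a, where V is the Lebesgue measure of the ball B_a^d. Then for every unit vector θ ∈ ℝ^d, the law of ⟨X, θ⟩ has a Lebesgue density g on ℝ satisfying c_f · f_d(ν) ≤ g(ν) ≤ C_f · f_d(ν) for Lebesgue-almost every ν ∈ ℝ (in particular g vanishes a.e. outside [−a, a]). -/
open MeasureTheory
open scoped RealInnerProductSpace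

private lemma c_alt (d : ℕ) :
    Real.Gamma ((d : ℝ) + 1) / (Real.Gamma (((d : ℝ) + 1) / 2) ^ 2 * 2 ^ d)
      = Real.Gamma ((d : ℝ) / 2 + 1) / (Real.sqrt Real.pi * Real.Gamma (((d : ℝ) + 1) / 2)) := by
  have h := Real.Gamma_mul_Gamma_add_half (((d : ℝ) + 1) / 2)
  rw [show 2 * (((d : ℝ) + 1) / 2) = (d : ℝ) + 1 by ring,
      show ((d : ℝ) + 1) / 2 + 1 / 2 = (d : ℝ) / 2 + 1 by ring,
      show (1 : ℝ) - ((d : ℝ) + 1) = -(d : ℝ) by ring,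
      Real.rpow_neg (by norm_num : (0:ℝ) ≤ 2), Real.rpow_natCast] at h
  have hΓ1 : Real.Gamma (((d:ℝ)+1)/2) ≠ 0 := (Real.Gamma_pos_of_pos (by positivity)).ne'
  have hs : Real.sqrt Real.pi ≠ 0 := (Real.sqrt_pos.mpr Real.pi_pos).ne'
  have h2d : ((2:ℝ)^d) ≠ 0 := by positivity
  field_simp
  field_simp at h
  linear_combination (-1 : ℝ) * h

private lemma volume_closedBall_ofReal (n : ℕ) (r : ℝ) (hr : 0 ≤ r) :
    volume (Metric.closedBall (0 : EuclideanSpace ℝ (Fin n)) r)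
      = ENNReal.ofReal (r ^ n * (Real.sqrt Real.pi ^ n / Real.Gamma ((n : ℝ) / 2 + 1))) := by
  rcases Nat.eq_zero_or_pos n with rfl | hn
  · have h1 : Metric.closedBall (0 : EuclideanSpace ℝ (Fin 0)) r = Set.univ := by
      ext x
      simp [Metric.mem_closedBall, Subsingleton.elim x 0, dist_self, hr]
    rw [h1]
    have h2 : volume (Set.univ : Set (EuclideanSpace ℝ (Fin 0))) = 1 := by
      rw [← ((EuclideanSpace.volume_preserving_symm_measurableEquiv_toLp (Fin 0)).symm _).measure_preimage
        MeasurableSet.univ.nullMeasurableSet]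
      simp [MeasureTheory.volume_pi, Measure.pi_univ]
    rw [h2]
    simp [Real.Gamma_one]
  · haveI : Nonempty (Fin n) := ⟨⟨0, hn⟩⟩
    rw [EuclideanSpace.volume_closedBall]
    simp only [Fintype.card_fin]
    rw [← ENNReal.ofReal_pow hr, ← ENNReal.ofReal_mul (by positivity)]

private lemma slice_ratio (n : ℕ) (a ν : ℝ) (ha : 0 < a) (hν : ν ^ 2 ≤ a ^ 2) :
    Real.sqrt (a^2 - ν^2) ^ n * (Real.sqrt Real.pi ^ n / Real.Gamma ((n : ℝ) / 2 + 1))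
      = (a ^ (n+1) * (Real.sqrt Real.pi ^ (n+1) / Real.Gamma (((n+1 : ℕ) : ℝ) / 2 + 1)))
        * (Real.Gamma (((n+1 : ℕ) : ℝ) / 2 + 1)
            / (Real.sqrt Real.pi * Real.Gamma ((((n+1 : ℕ) : ℝ) + 1) / 2)) / a
          * (1 - ν^2/a^2) ^ ((((n+1 : ℕ) : ℝ) - 1) / 2)) := by
  have ht : 0 ≤ a^2 - ν^2 := by linarith
  push_cast
  rw [show (((n:ℝ) + 1) - 1)/2 = (n:ℝ)/2 by ring,
      show ((n:ℝ) + 1 + 1)/2 = (n:ℝ)/2 + 1 by ring]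
  have h1 : (1 - ν^2/a^2) = (a^2 - ν^2)/a^2 := by field_simp
  rw [h1, Real.div_rpow ht (sq_nonneg a)]
  have h2 : ((a^2 : ℝ)) ^ ((n:ℝ)/2) = a ^ n := by
    rw [← Real.rpow_natCast a 2, ← Real.rpow_mul ha.le,
      show ((2:ℕ):ℝ) * ((n:ℝ)/2) = ((n:ℕ):ℝ) by push_cast; ring, Real.rpow_natCast]
  have h3 : Real.sqrt (a^2-ν^2) ^ n = (a^2-ν^2) ^ ((n:ℝ)/2) := by
    rw [← Real.rpow_natCast (Real.sqrt _) n, Real.sqrt_eq_rpow, ← Real.rpow_mul ht,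
      show (1/2 : ℝ) * (n:ℝ) = (n:ℝ)/2 by ring]
  rw [h2, h3]
  have hΓ1 : Real.Gamma ((n:ℝ)/2 + 1) ≠ 0 := (Real.Gamma_pos_of_pos (by positivity)).ne'
  have hΓ2 : Real.Gamma (((n:ℝ)+1)/2 + 1) ≠ 0 := (Real.Gamma_pos_of_pos (by positivity)).ne'
  have hs : Real.sqrt Real.pi ≠ 0 := (Real.sqrt_pos.mpr Real.pi_pos).ne'
  field_simp
  ring

private lemma norm_sq_eq (m : ℕ) (x : EuclideanSpace ℝ (Fin m)) :
    ‖x‖^2 = ∑ i, (x i)^2 := by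
  rw [EuclideanSpace.norm_eq, Real.sq_sqrt (by positivity)]
  simp [sq_abs]

private lemma ball_slice_measure (n : ℕ) (a : ℝ) (ha : 0 < a) (s : Set ℝ)
    (hs : MeasurableSet s) :
    volume {x : EuclideanSpace ℝ (Fin (n+1)) | x 0 ∈ s ∧ ‖x‖ ≤ a}
      = ∫⁻ ν in s, Set.indicator (Set.Icc (-a) a)
          (fun ν => volume (Metric.closedBall (0 : EuclideanSpace ℝ (Fin n))
            (Real.sqrt (a^2 - ν^2)))) ν := by
  set B : Set (Fin (n+1) → ℝ) := {w | w 0 ∈ s ∧ ∑ i, (w i)^2 ≤ a^2} with hB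
  have hsum : Measurable fun w : Fin (n+1) → ℝ => ∑ i, (w i)^2 := by fun_prop
  have hBm : MeasurableSet B :=
    ((measurable_pi_apply 0) hs).inter (measurableSet_le hsum measurable_const)
  have step1 : volume {x : EuclideanSpace ℝ (Fin (n+1)) | x 0 ∈ s ∧ ‖x‖ ≤ a} = volume B := by
    rw [← (EuclideanSpace.volume_preserving_symm_measurableEquiv_toLp
        (Fin (n+1))).measure_preimage hBm.nullMeasurableSet]
    congr 1
    ext x
    simp only [Set.mem_preimage, Set.mem_setOf_eq, hB]
    have happ : ∀ i, ((MeasurableEquiv.toLp 2 (Fin (n+1) → ℝ)).symm x) i = x i := fun _ => rfl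
    simp only [happ]
    refine and_congr_right fun _ => ?_
    rw [← norm_sq_eq]
    constructor
    · intro h; exact pow_le_pow_left₀ (norm_nonneg x) h 2
    · intro h; nlinarith [norm_nonneg x, ha]
  set C : Set (ℝ × (Fin n → ℝ)) := {p | p.1 ∈ s ∧ p.1^2 + ∑ j, (p.2 j)^2 ≤ a^2} with hC
  have hsum2 : Measurable fun p : ℝ × (Fin n → ℝ) => p.1^2 + ∑ j, (p.2 j)^2 := by fun_prop
  have hCm : MeasurableSet C :=
    (measurable_fst hs).inter (measurableSet_le hsum2 measurable_const)
  have step2 : volume B = (volume : Measure (ℝ × (Fin n → ℝ))) C := by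
    rw [← (volume_preserving_piFinSuccAbove (fun _ : Fin (n+1) => ℝ) 0).measure_preimage
      hCm.nullMeasurableSet]
    congr 1
    ext w
    simp only [Set.mem_preimage]
    have hw : (MeasurableEquiv.piFinSuccAbove (fun _ : Fin (n+1) => ℝ) 0) w
        = (w 0, Fin.removeNth 0 w) := rfl
    rw [hw]
    simp only [Set.mem_setOf_eq, hC, hB, Fin.removeNth, Fin.zero_succAbove, Fin.sum_univ_succ]
  have step3 : (volume : Measure (ℝ × (Fin n → ℝ))) C
      = ∫⁻ ν, Set.indicator s
          (fun ν => volume {y : Fin n → ℝ | ∑ j, (y j)^2 ≤ a^2 - ν^2}) ν := by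
    rw [Measure.volume_eq_prod, Measure.prod_apply hCm]
    congr 1
    ext ν
    by_cases hν : ν ∈ s
    · rw [Set.indicator_of_mem hν]
      congr 1
      ext y
      simp only [Set.mem_preimage, Set.mem_setOf_eq, hC, hν, true_and]
      constructor <;> intro h <;> linarith
    · rw [Set.indicator_of_notMem hν]
      have he : (Prod.mk ν ⁻¹' C) = ∅ := by
        ext y; simp [hC, hν]
      simp [he]
  have step5 : ∀ ν : ℝ, volume {y : Fin n → ℝ | ∑ j, (y j)^2 ≤ a^2 - ν^2}
      = Set.indicator (Set.Icc (-a) a)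
          (fun ν => volume (Metric.closedBall (0 : EuclideanSpace ℝ (Fin n))
            (Real.sqrt (a^2 - ν^2)))) ν := by
    intro ν
    have hsm : MeasurableSet {y : Fin n → ℝ | ∑ j, (y j)^2 ≤ a^2 - ν^2} :=
      measurableSet_le (by fun_prop) measurable_const
    by_cases hν : ν ∈ Set.Icc (-a) a
    · rw [Set.indicator_of_mem hν]
      obtain ⟨h1, h2⟩ := hν
      have ht : 0 ≤ a^2 - ν^2 := by nlinarith
      rw [← (EuclideanSpace.volume_preserving_symm_measurableEquiv_toLp
          (Fin n)).measure_preimage hsm.nullMeasurableSet]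
      congr 1
      ext z
      have happ : ∀ i, ((MeasurableEquiv.toLp 2 (Fin n → ℝ)).symm z) i = z i := fun _ => rfl
      simp only [Set.mem_preimage, Set.mem_setOf_eq, happ, Metric.mem_closedBall,
        dist_zero_right]
      rw [← norm_sq_eq]
      constructor
      · intro h
        calc ‖z‖ = Real.sqrt (‖z‖^2) := (Real.sqrt_sq (norm_nonneg z)).symm
          _ ≤ Real.sqrt (a^2 - ν^2) := Real.sqrt_le_sqrt h
      · intro h
        calc ‖z‖^2 ≤ Real.sqrt (a^2-ν^2)^2 := pow_le_pow_left₀ (norm_nonneg z) h 2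
          _ = a^2 - ν^2 := Real.sq_sqrt ht
    · rw [Set.indicator_of_notMem hν]
      have hlt : a^2 - ν^2 < 0 := by
        simp only [Set.mem_Icc, not_and_or, not_le] at hν
        rcases hν with h | h <;> nlinarith
      have he : {y : Fin n → ℝ | ∑ j, (y j)^2 ≤ a^2 - ν^2} = ∅ := by
        ext y
        simp only [Set.mem_setOf_eq, Set.mem_empty_iff_false, iff_false, not_le]
        have : (0:ℝ) ≤ ∑ j, (y j)^2 := by positivity
        linarith
      simp [he]
  rw [step1, step2, step3]
  rw [← lintegral_indicator hs]
  · congr 1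
    ext ν
    by_cases hν : ν ∈ s
    · rw [Set.indicator_of_mem hν, Set.indicator_of_mem hν, step5]
    · rw [Set.indicator_of_notMem hν, Set.indicator_of_notMem hν]

/-- If the law of `X` has a density bounded between `c_f/V` and `C_f/V`
on the ball `B_a^d` (and vanishing outside), then for every unit vector `θ` the law of
`⟨X, θ⟩` has a Lebesgue density `g` with `c_f·f_d ≤ g ≤ C_f·f_d` almost everywhere. -/
theorem projection_density_bounds
    (d : ℕ) (hd : 1 ≤ d) (a : ℝ) (ha : 0 < a)
    (cf Cf : ℝ) (hcf : 0 < cf) (hcfCf : cf ≤ Cf)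
    (c : ℝ)
    (hc : c = Real.Gamma ((d : ℝ) + 1) / (Real.Gamma (((d : ℝ) + 1) / 2) ^ 2 * 2 ^ d))
    (fd : ℝ → ℝ)
    (hfd : fd = Set.indicator (Set.Icc (-a) a)
        (fun ν => c / a * (1 - ν ^ 2 / a ^ 2) ^ (((d : ℝ) - 1) / 2)))
    (V : ℝ)
    (hV : V = (volume (Metric.closedBall (0 : EuclideanSpace ℝ (Fin d)) a)).toReal)
    (Ω : Type*) [MeasurableSpace Ω] (P : Measure Ω) [IsProbabilityMeasure P]
    (X : Ω → EuclideanSpace ℝ (Fin d)) (hX : Measurable X)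
    (f : EuclideanSpace ℝ (Fin d) → ℝ)
    (hlaw : Measure.map X P = volume.withDensity (fun x => ENNReal.ofReal (f x)))
    (hf0 : ∀ x, a < ‖x‖ → f x = 0)
    (hfb : ∀ x, ‖x‖ ≤ a → cf / V ≤ f x ∧ f x ≤ Cf / V)
    (θ : EuclideanSpace ℝ (Fin d)) (hθ : ‖θ‖ = 1) :
    ∃ g : ℝ → ℝ,
      Measure.map (fun ω => ⟪X ω, θ⟫) P =
          volume.withDensity (fun ν => ENNReal.ofReal (g ν)) ∧
        ∀ᵐ ν : ℝ, cf * fd ν ≤ g ν ∧ g ν ≤ Cf * fd ν := by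
  obtain ⟨n, rfl⟩ : ∃ n, d = n + 1 := ⟨d - 1, (Nat.succ_pred_eq_of_pos hd).symm⟩
  have hCf : 0 < Cf := hcf.trans_le hcfCf
  have hΓa : 0 < Real.Gamma (((n+1:ℕ):ℝ)/2 + 1) := Real.Gamma_pos_of_pos (by positivity)
  have hΓb : 0 < Real.Gamma ((((n+1:ℕ):ℝ)+1)/2) := Real.Gamma_pos_of_pos (by positivity)
  have hΓc : 0 < Real.Gamma (((n+1:ℕ):ℝ)+1) := Real.Gamma_pos_of_pos (by positivity)
  have hsπ : 0 < Real.sqrt Real.pi := Real.sqrt_pos.mpr Real.pi_pos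
  have hcpos : 0 < c := by
    rw [hc]
    exact div_pos hΓc (mul_pos (pow_pos hΓb 2) (by positivity))
  have hVval : V = a ^ (n+1) * (Real.sqrt Real.pi ^ (n+1)
      / Real.Gamma (((n+1:ℕ):ℝ)/2 + 1)) := by
    rw [hV, volume_closedBall_ofReal (n+1) a ha.le, ENNReal.toReal_ofReal]
    exact mul_nonneg (pow_nonneg ha.le _)
      (div_nonneg (pow_nonneg (Real.sqrt_nonneg _) _) hΓa.le)
  have hVpos : 0 < V := by
    rw [hVval]
    exact mul_pos (pow_pos ha _) (div_pos (pow_pos hsπ _) hΓa)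
  have hfdnn : ∀ ν, 0 ≤ fd ν := by
    intro ν
    rw [hfd]
    by_cases hν : ν ∈ Set.Icc (-a) a
    · rw [Set.indicator_of_mem hν]
      obtain ⟨h1, h2⟩ := hν
      have hbase : 0 ≤ 1 - ν^2/a^2 := by
        rw [sub_nonneg, div_le_one (by positivity)]
        nlinarith
      exact mul_nonneg (div_pos hcpos ha).le (Real.rpow_nonneg hbase _)
    · rw [Set.indicator_of_notMem hν]
  have hfdm : Measurable fd := by
    rw [hfd]
    exact Measurable.indicator
      (((measurable_const.sub ((measurable_id.pow_const 2).div_const _)).pow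
        measurable_const).const_mul _)
      measurableSet_Icc
  -- pointwise identity for the slice volume
  have hW : ∀ ν : ℝ, Set.indicator (Set.Icc (-a) a)
      (fun ν => volume (Metric.closedBall (0 : EuclideanSpace ℝ (Fin n))
        (Real.sqrt (a^2 - ν^2)))) ν
      = ENNReal.ofReal (V * fd ν) := by
    intro ν
    by_cases hν : ν ∈ Set.Icc (-a) a
    · rw [Set.indicator_of_mem hν, hfd, Set.indicator_of_mem hν]
      obtain ⟨h1, h2⟩ := hν
      have hνa : ν^2 ≤ a^2 := by nlinarith
      rw [volume_closedBall_ofReal n _ (Real.sqrt_nonneg _)]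
      congr 1
      rw [hVval, hc, c_alt (n+1)]
      exact slice_ratio n a ν ha hνa
    · rw [Set.indicator_of_notMem hν, hfd, Set.indicator_of_notMem hν]
      simp
  -- orthonormal basis with b 0 = θ
  have horth : Orthonormal ℝ (Set.restrict ({0} : Set (Fin (n+1))) (fun _ => θ)) := by
    constructor
    · intro i; exact hθ
    · intro i j hij
      exact absurd (Subtype.ext ((Set.mem_singleton_iff.mp i.2).trans
        (Set.mem_singleton_iff.mp j.2).symm)) hij
  obtain ⟨b, hb⟩ := horth.exists_orthonormalBasis_extension_of_card_eq
    (by simp [finrank_euclideanSpace])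
  have hb0 : b 0 = θ := hb 0 rfl
  have hinner : ∀ x : EuclideanSpace ℝ (Fin (n+1)), ⟪x, θ⟫ = b.repr x 0 := by
    intro x
    rw [real_inner_comm, ← hb0]
    exact (b.repr_apply_apply x 0).symm
  have hmi : Measurable (fun x : EuclideanSpace ℝ (Fin (n+1)) => ⟪x, θ⟫) :=
    (continuous_id.inner continuous_const).measurable
  set μ' : Measure ℝ := Measure.map (fun ω => ⟪X ω, θ⟫) P with hμ'
  have hXi : Measurable fun ω => ⟪X ω, θ⟫ := hmi.comp hX
  haveI : IsProbabilityMeasure μ' := Measure.isProbabilityMeasure_map hXi.aemeasurable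
  have hkey : ∀ s : Set ℝ, MeasurableSet s →
      volume ({x : EuclideanSpace ℝ (Fin (n+1)) | ⟪x, θ⟫ ∈ s} ∩ Metric.closedBall 0 a)
        = ∫⁻ ν in s, ENNReal.ofReal (V * fd ν) := by
    intro s hs
    have hsetm : MeasurableSet {z : EuclideanSpace ℝ (Fin (n+1)) | z 0 ∈ s ∧ ‖z‖ ≤ a} := by
      apply MeasurableSet.inter
      · exact ((measurable_pi_apply 0).comp (MeasurableEquiv.toLp 2 (Fin (n+1) → ℝ)).symm.measurable) hs
      · exact measurableSet_le measurable_norm measurable_const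
    have hset : {x : EuclideanSpace ℝ (Fin (n+1)) | ⟪x, θ⟫ ∈ s} ∩ Metric.closedBall 0 a
        = b.repr ⁻¹' {z : EuclideanSpace ℝ (Fin (n+1)) | z 0 ∈ s ∧ ‖z‖ ≤ a} := by
      ext x
      simp only [Set.mem_inter_iff, Set.mem_setOf_eq, Set.mem_preimage, Metric.mem_closedBall,
        dist_zero_right, hinner x, b.repr.norm_map]
    rw [hset, b.measurePreserving_repr.measure_preimage hsetm.nullMeasurableSet,
      ball_slice_measure n a ha s hs]
    exact lintegral_congr fun ν => hW ν
  have hμ's : ∀ s : Set ℝ, MeasurableSet s →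
      μ' s = ∫⁻ x in {x : EuclideanSpace ℝ (Fin (n+1)) | ⟪x, θ⟫ ∈ s},
        ENNReal.ofReal (f x) := by
    intro s hs
    calc μ' s = P ((fun ω => ⟪X ω, θ⟫) ⁻¹' s) := Measure.map_apply hXi hs
      _ = Measure.map X P {x | ⟪x, θ⟫ ∈ s} := (Measure.map_apply hX (hmi hs)).symm
      _ = ∫⁻ x in {x : EuclideanSpace ℝ (Fin (n+1)) | ⟪x, θ⟫ ∈ s}, ENNReal.ofReal (f x) := by
          rw [hlaw, withDensity_apply _
            (show MeasurableSet {x : EuclideanSpace ℝ (Fin (n+1)) | ⟪x, θ⟫ ∈ s} from hmi hs)]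
  have hupper : ∀ s : Set ℝ, MeasurableSet s →
      μ' s ≤ ∫⁻ ν in s, ENNReal.ofReal (Cf * fd ν) := by
    intro s hs
    rw [hμ's s hs]
    have hpt : ∀ x : EuclideanSpace ℝ (Fin (n+1)), ENNReal.ofReal (f x)
        ≤ (Metric.closedBall (0 : EuclideanSpace ℝ (Fin (n+1))) a).indicator
            (fun _ => ENNReal.ofReal (Cf / V)) x := by
      intro x
      by_cases hx : x ∈ Metric.closedBall (0 : EuclideanSpace ℝ (Fin (n+1))) a
      · rw [Set.indicator_of_mem hx]
        exact ENNReal.ofReal_le_ofReal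
          (hfb x (by simpa [Metric.mem_closedBall, dist_zero_right] using hx)).2
      · rw [Set.indicator_of_notMem hx,
          hf0 x (by simpa [Metric.mem_closedBall, dist_zero_right, not_le] using hx)]
        simp
    calc ∫⁻ x in {x : EuclideanSpace ℝ (Fin (n+1)) | ⟪x, θ⟫ ∈ s}, ENNReal.ofReal (f x)
        ≤ ∫⁻ x in {x : EuclideanSpace ℝ (Fin (n+1)) | ⟪x, θ⟫ ∈ s},
            (Metric.closedBall (0 : EuclideanSpace ℝ (Fin (n+1))) a).indicator
              (fun _ => ENNReal.ofReal (Cf / V)) x := lintegral_mono hpt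
      _ = ENNReal.ofReal (Cf / V)
            * volume (Metric.closedBall (0 : EuclideanSpace ℝ (Fin (n+1))) a
                ∩ {x | ⟪x, θ⟫ ∈ s}) := by
          rw [lintegral_indicator measurableSet_closedBall,
            Measure.restrict_restrict measurableSet_closedBall, setLIntegral_const]
      _ = ENNReal.ofReal (Cf / V) * ∫⁻ ν in s, ENNReal.ofReal (V * fd ν) := by
          rw [Set.inter_comm, hkey s hs]
      _ = ∫⁻ ν in s, ENNReal.ofReal (Cf / V) * ENNReal.ofReal (V * fd ν) :=
          (lintegral_const_mul _ ((measurable_const.mul hfdm).ennreal_ofReal)).symm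
      _ = ∫⁻ ν in s, ENNReal.ofReal (Cf * fd ν) := by
          refine lintegral_congr fun ν => ?_
          rw [← ENNReal.ofReal_mul (div_nonneg hCf.le hVpos.le)]
          congr 1
          field_simp
  have hlower : ∀ s : Set ℝ, MeasurableSet s →
      (∫⁻ ν in s, ENNReal.ofReal (cf * fd ν)) ≤ μ' s := by
    intro s hs
    rw [hμ's s hs]
    have hpt : ∀ x : EuclideanSpace ℝ (Fin (n+1)),
        (Metric.closedBall (0 : EuclideanSpace ℝ (Fin (n+1))) a).indicator
            (fun _ => ENNReal.ofReal (cf / V)) x ≤ ENNReal.ofReal (f x) := by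
      intro x
      by_cases hx : x ∈ Metric.closedBall (0 : EuclideanSpace ℝ (Fin (n+1))) a
      · rw [Set.indicator_of_mem hx]
        exact ENNReal.ofReal_le_ofReal
          (hfb x (by simpa [Metric.mem_closedBall, dist_zero_right] using hx)).1
      · rw [Set.indicator_of_notMem hx]
        simp
    calc (∫⁻ ν in s, ENNReal.ofReal (cf * fd ν))
        = ∫⁻ ν in s, ENNReal.ofReal (cf / V) * ENNReal.ofReal (V * fd ν) := by
          refine lintegral_congr fun ν => ?_
          rw [← ENNReal.ofReal_mul (div_nonneg hcf.le hVpos.le)]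
          congr 1
          field_simp
      _ = ENNReal.ofReal (cf / V) * ∫⁻ ν in s, ENNReal.ofReal (V * fd ν) :=
          lintegral_const_mul _ ((measurable_const.mul hfdm).ennreal_ofReal)
      _ = ENNReal.ofReal (cf / V)
            * volume (Metric.closedBall (0 : EuclideanSpace ℝ (Fin (n+1))) a
                ∩ {x | ⟪x, θ⟫ ∈ s}) := by
          rw [Set.inter_comm, hkey s hs]
      _ = ∫⁻ x in {x : EuclideanSpace ℝ (Fin (n+1)) | ⟪x, θ⟫ ∈ s},
            (Metric.closedBall (0 : EuclideanSpace ℝ (Fin (n+1))) a).indicator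
              (fun _ => ENNReal.ofReal (cf / V)) x := by
          rw [lintegral_indicator measurableSet_closedBall,
            Measure.restrict_restrict measurableSet_closedBall, setLIntegral_const]
      _ ≤ ∫⁻ x in {x : EuclideanSpace ℝ (Fin (n+1)) | ⟪x, θ⟫ ∈ s}, ENNReal.ofReal (f x) :=
          lintegral_mono hpt
  have hac : μ' ≪ volume := by
    intro s hs0
    have h1 : μ' s ≤ μ' (toMeasurable volume s) := measure_mono (subset_toMeasurable _ _)
    have h2 := hupper _ (measurableSet_toMeasurable volume s)
    have h3 : volume (toMeasurable volume s) = 0 := by rwa [measure_toMeasurable]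
    exact le_antisymm
      (h1.trans (h2.trans_eq (setLIntegral_measure_zero _ _ h3))) zero_le
  have hrnd := Measure.withDensity_rnDeriv_eq μ' volume hac
  have hup : μ'.rnDeriv volume ≤ᵐ[volume] fun ν => ENNReal.ofReal (Cf * fd ν) :=
    ae_le_of_forall_setLIntegral_le_of_sigmaFinite (Measure.measurable_rnDeriv _ _)
      fun s hs _ => (Measure.setLIntegral_rnDeriv_le s).trans (hupper s hs)
  have hlo : (fun ν => ENNReal.ofReal (cf * fd ν)) ≤ᵐ[volume] μ'.rnDeriv volume :=
    ae_le_of_forall_setLIntegral_le_of_sigmaFinite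
      ((measurable_const.mul hfdm).ennreal_ofReal)
      fun s hs _ => (hlower s hs).trans_eq (Measure.setLIntegral_rnDeriv hac s).symm
  refine ⟨fun ν => (μ'.rnDeriv volume ν).toReal, ?_, ?_⟩
  · have hae : (fun ν => ENNReal.ofReal ((μ'.rnDeriv volume ν).toReal))
        =ᵐ[volume] μ'.rnDeriv volume := by
      filter_upwards [Measure.rnDeriv_lt_top μ' volume] with ν hν
      exact ENNReal.ofReal_toReal hν.ne
    rw [withDensity_congr_ae hae, hrnd]
  · filter_upwards [hup, hlo, Measure.rnDeriv_lt_top μ' volume] with ν h1 h2 h3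
    have hfd1 : 0 ≤ cf * fd ν := mul_nonneg hcf.le (hfdnn ν)
    have hfd2 : 0 ≤ Cf * fd ν := mul_nonneg hCf.le (hfdnn ν)
    constructor
    · have := ENNReal.toReal_mono h3.ne h2
      rwa [ENNReal.toReal_ofReal hfd1] at this
    · have := ENNReal.toReal_mono ENNReal.ofReal_ne_top h1
      rwa [ENNReal.toReal_ofReal hfd2] at this
end

section
/- Let d ≥ 1 be an integer, a > 0, 0 < c_f ≤ C_f, and let X be a random vector in ℝ^d whose law has a Lebesgue density f with f(x) = 0 for ‖x‖ > a and c_f/V ≤ f(x) ≤ C_f/V for ‖x‖ ≤ a, where V is the Lebesgue measure of the ball B_a^d. For a unit vector θ ∈ ℝ^d define the transformed variable Z_θ = F_d(⟨X, θ⟩). Then the law of Z_θ has a Lebesgue density h satisfying c_f ≤ h(z) ≤ C_f for almost every z ∈ [0,1], and h(z) = 0 for almost every z outside [0,1]; in particular Z_θ is quasi-uniform on [0,1]. -/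
set_option maxHeartbeats 1000000

open MeasureTheory Set
open scoped RealInnerProductSpace


/-- Volume of a "sum of squares" ball in the pi space. -/
lemma qu_slice_volume (n : ℕ) (b : ℝ) (hb : 0 ≤ b) :
    volume {w : Fin n → ℝ | ∑ i, w i ^ 2 ≤ b} =
      ENNReal.ofReal (b ^ ((n : ℝ) / 2) *
        (Real.sqrt Real.pi ^ n / Real.Gamma ((n : ℝ) / 2 + 1))) := by
  rcases Nat.eq_zero_or_pos n with hn | hn
  · subst hn
    have h1 : {w : Fin 0 → ℝ | ∑ i, w i ^ 2 ≤ b} = Set.univ := by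
      ext w; simp [hb]
    rw [h1]
    have : (volume : Measure (Fin 0 → ℝ)) Set.univ = 1 := by
      rw [MeasureTheory.volume_pi, ← Set.pi_univ Set.univ, Measure.pi_pi]
      simp
    rw [this]
    norm_num [Real.Gamma_one]
  haveI : Nonempty (Fin n) := Fin.pos_iff_nonempty.mp hn
  have hmp := (EuclideanSpace.volume_preserving_symm_measurableEquiv_toLp (Fin n)).symm
  have hset : {w : Fin n → ℝ | ∑ i, w i ^ 2 ≤ b} =
      (MeasurableEquiv.toLp 2 (Fin n → ℝ)).symm.symm ⁻¹'
        (Metric.closedBall (0 : EuclideanSpace ℝ (Fin n)) (Real.sqrt b)) := by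
    ext w
    have : ∀ i, ‖((MeasurableEquiv.toLp 2 (Fin n → ℝ)).symm.symm w) i‖ ^ 2 = w i ^ 2 := by
      intro i
      simp [MeasurableEquiv.toLp_apply, Real.norm_eq_abs, sq_abs]
    simp only [Set.mem_preimage, Metric.mem_closedBall, dist_zero_right, Set.mem_setOf_eq,
      EuclideanSpace.norm_eq, this]
    rw [← Real.sqrt_le_sqrt_iff (by positivity)]
  rw [hset, hmp.measure_preimage measurableSet_closedBall.nullMeasurableSet,
    EuclideanSpace.volume_closedBall, Fintype.card_fin,
    ← ENNReal.ofReal_pow (Real.sqrt_nonneg _), ← ENNReal.ofReal_mul (by positivity)]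
  congr 2
  rw [Real.sqrt_eq_rpow, ← Real.rpow_natCast (b ^ (1/(2:ℝ))) n, ← Real.rpow_mul hb]
  ring_nf

/-- Volume of a spherical cap expressed as an integral over slices. -/
lemma qu_cap_volume (n : ℕ) (a ν : ℝ) (ha : 0 < a) (hν₁ : -a ≤ ν) (hν₂ : ν ≤ a)
    (θ : EuclideanSpace ℝ (Fin (n + 1))) (hθ : ‖θ‖ = 1) :
    volume {x : EuclideanSpace ℝ (Fin (n + 1)) | ‖x‖ ≤ a ∧ ⟪x, θ⟫ ≤ ν} =
      ∫⁻ t in Icc (-a) ν, ENNReal.ofReal ((a ^ 2 - t ^ 2) ^ ((n : ℝ) / 2) *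
        (Real.sqrt Real.pi ^ n / Real.Gamma ((n : ℝ) / 2 + 1))) := by
  classical
  -- orthonormal basis with first vector θ
  have hcard : Module.finrank ℝ (EuclideanSpace ℝ (Fin (n + 1))) = Fintype.card (Fin (n + 1)) := by
    simp [finrank_euclideanSpace]
  have horth : Orthonormal ℝ (({0} : Set (Fin (n + 1))).restrict (fun _ => θ)) := by
    constructor
    · intro i; exact hθ
    · intro i j hij
      exact absurd (Subtype.ext (by rw [i.2, j.2])) hij
  obtain ⟨b, hb⟩ := horth.exists_orthonormalBasis_extension_of_card_eq hcard
  have hb0 : b 0 = θ := hb 0 rfl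
  -- the three sets
  set Q : Set (ℝ × (Fin n → ℝ)) :=
    {p | p.1 ^ 2 + ∑ i, p.2 i ^ 2 ≤ a ^ 2 ∧ p.1 ≤ ν} with hQdef
  have hsum_cont : Continuous fun w : Fin n → ℝ => ∑ i, w i ^ 2 :=
    continuous_finset_sum _ fun i _ => (continuous_apply i).pow 2
  have hQm : MeasurableSet Q := by
    apply MeasurableSet.inter
    · exact measurableSet_le
        ((continuous_fst.pow 2).add (hsum_cont.comp continuous_snd)).measurable
        measurable_const
    · exact measurableSet_le continuous_fst.measurable measurable_const
  set A₂ : Set (Fin (n + 1) → ℝ) := {y | ∑ i, y i ^ 2 ≤ a ^ 2 ∧ y 0 ≤ ν} with hA₂def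
  set A₁ : Set (EuclideanSpace ℝ (Fin (n + 1))) := {y | ‖y‖ ≤ a ∧ y 0 ≤ ν} with hA₁def
  -- step 1 : b.repr
  have step1 : {x : EuclideanSpace ℝ (Fin (n + 1)) | ‖x‖ ≤ a ∧ ⟪x, θ⟫ ≤ ν} = b.repr ⁻¹' A₁ := by
    ext x
    have h1 : ‖b.repr x‖ = ‖x‖ := b.repr.norm_map x
    have h2 : (b.repr x) 0 = ⟪x, θ⟫ := by
      rw [b.repr_apply_apply, hb0, real_inner_comm]
    simp only [Set.mem_preimage, hA₁def, Set.mem_setOf_eq, h1, h2]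
  have hA₁m : MeasurableSet A₁ := by
    apply MeasurableSet.inter
    · exact measurableSet_le continuous_norm.measurable measurable_const
    · exact measurableSet_le (by fun_prop : Continuous fun y : EuclideanSpace ℝ (Fin (n + 1)) => y 0).measurable measurable_const
  -- step 2 : Euclidean → pi
  have step2 : A₁ = ((MeasurableEquiv.toLp 2 (Fin (n + 1) → ℝ)).symm) ⁻¹' A₂ := by
    ext y
    have hy : ∀ i, (((MeasurableEquiv.toLp 2 (Fin (n + 1) → ℝ)).symm) y) i = y i := fun i => rfl
    have hnorm : ‖y‖ ≤ a ↔ ∑ i, y i ^ 2 ≤ a ^ 2 := by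
      rw [EuclideanSpace.norm_eq]
      constructor
      · intro h
        have h2 : (Real.sqrt (∑ i, ‖y i‖ ^ 2)) ^ 2 ≤ a ^ 2 := by
          apply pow_le_pow_left₀ (Real.sqrt_nonneg _) h
        rw [Real.sq_sqrt (by positivity)] at h2
        simpa [Real.norm_eq_abs, sq_abs] using h2
      · intro h
        have : Real.sqrt (∑ i, ‖y i‖ ^ 2) ≤ Real.sqrt (a ^ 2) := by
          apply Real.sqrt_le_sqrt
          simpa [Real.norm_eq_abs, sq_abs] using h
        rwa [Real.sqrt_sq ha.le] at this
    simp only [Set.mem_preimage, hA₁def, hA₂def, Set.mem_setOf_eq, hy, hnorm]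
  have hA₂m : MeasurableSet A₂ := by
    apply MeasurableSet.inter
    · exact measurableSet_le
        (continuous_finset_sum _ fun (i : Fin (n+1)) _ => (continuous_apply i).pow 2).measurable
        measurable_const
    · exact measurableSet_le (continuous_apply (0 : Fin (n + 1))).measurable measurable_const
  -- step 3 : split off coordinate 0
  have step3 : A₂ = (MeasurableEquiv.piFinSuccAbove (fun _ : Fin (n + 1) => ℝ) 0) ⁻¹' Q := by
    ext y
    have happ : (MeasurableEquiv.piFinSuccAbove (fun _ : Fin (n + 1) => ℝ) 0) y =
        (y 0, fun j : Fin n => y ((0 : Fin (n + 1)).succAbove j)) := rfl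
    have hsum : ∑ i, y i ^ 2 = y 0 ^ 2 + ∑ j : Fin n, y j.succ ^ 2 := Fin.sum_univ_succ _
    simp only [Set.mem_preimage, hA₂def, hQdef, Set.mem_setOf_eq, happ, Fin.succAbove_zero,
      Function.comp]
    rw [hsum]
  -- put together
  rw [step1, (b.measurePreserving_repr).measure_preimage hA₁m.nullMeasurableSet,
    step2, (EuclideanSpace.volume_preserving_symm_measurableEquiv_toLp
      (Fin (n + 1))).measure_preimage hA₂m.nullMeasurableSet,
    step3, (MeasureTheory.volume_preserving_piFinSuccAbove (fun _ : Fin (n + 1) => ℝ)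
      0).measure_preimage hQm.nullMeasurableSet]
  -- product measure
  rw [show (volume : Measure (ℝ × (Fin n → ℝ))) = (volume : Measure ℝ).prod volume from rfl,
    Measure.prod_apply hQm]
  have hslice : ∀ t : ℝ, volume (Prod.mk t ⁻¹' Q) =
      (Icc (-a) ν).indicator (fun t => ENNReal.ofReal ((a ^ 2 - t ^ 2) ^ ((n : ℝ) / 2) *
        (Real.sqrt Real.pi ^ n / Real.Gamma ((n : ℝ) / 2 + 1)))) t := by
    intro t
    by_cases ht : t ∈ Icc (-a) ν
    · have hb2 : 0 ≤ a ^ 2 - t ^ 2 := by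
        rcases ht with ⟨h1, h2⟩; nlinarith
      have : Prod.mk t ⁻¹' Q = {w : Fin n → ℝ | ∑ i, w i ^ 2 ≤ a ^ 2 - t ^ 2} := by
        ext w
        simp only [Set.mem_preimage, hQdef, Set.mem_setOf_eq]
        constructor
        · intro ⟨h1, _⟩; linarith
        · intro h; exact ⟨by linarith, ht.2⟩
      rw [this, qu_slice_volume n _ hb2, Set.indicator_of_mem ht]
    · rw [Set.indicator_of_notMem ht]
      by_cases htν : t ≤ ν
      · have hta : t < -a := by
          by_contra hcon
          exact ht ⟨le_of_not_gt hcon, htν⟩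
        have : Prod.mk t ⁻¹' Q = ∅ := by
          ext w
          simp only [Set.mem_preimage, hQdef, Set.mem_setOf_eq, Set.mem_empty_iff_false,
            iff_false, not_and]
          intro hle
          have hw : 0 ≤ ∑ i, w i ^ 2 := by positivity
          nlinarith
        rw [this, measure_empty]
      · have : Prod.mk t ⁻¹' Q = ∅ := by
          ext w
          simp only [Set.mem_preimage, hQdef, Set.mem_setOf_eq, Set.mem_empty_iff_false,
            iff_false, not_and]
          intro _
          exact htν
        rw [this, measure_empty]
  rw [lintegral_congr hslice, lintegral_indicator measurableSet_Icc]

lemma qu_const (d n : ℕ) (hdn : d = n + 1) (c : ℝ)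
    (hc : c = Real.Gamma ((d : ℝ) + 1) / (Real.Gamma (((d : ℝ) + 1) / 2) ^ 2 * 2 ^ d)) :
    Real.sqrt Real.pi ^ n / Real.Gamma ((n : ℝ) / 2 + 1) =
      Real.sqrt Real.pi ^ d / Real.Gamma ((d : ℝ) / 2 + 1) * c := by
  have hG1 : 0 < Real.Gamma (((d : ℝ) + 1) / 2) := Real.Gamma_pos_of_pos (by positivity)
  have hG2 : 0 < Real.Gamma ((d : ℝ) / 2 + 1) := Real.Gamma_pos_of_pos (by positivity)
  have hsπ : 0 < Real.sqrt Real.pi := Real.sqrt_pos.mpr Real.pi_pos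
  have hdup := Real.Gamma_mul_Gamma_add_half (((d : ℝ) + 1) / 2)
  have e2 : 2 * (((d : ℝ) + 1) / 2) = (d : ℝ) + 1 := by ring
  rw [e2] at hdup
  have e1 : ((d : ℝ) + 1) / 2 + 1 / 2 = (d : ℝ) / 2 + 1 := by ring
  rw [e1] at hdup
  have e3 : (1 : ℝ) - ((d : ℝ) + 1) = -(d : ℝ) := by ring
  rw [e3, Real.rpow_neg (by norm_num : (0:ℝ) ≤ 2), Real.rpow_natCast] at hdup
  -- hdup : Γ((d+1)/2) * Γ(d/2+1) = Γ(d+1) * (2^d)⁻¹ * √π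
  have hnd : (n : ℝ) / 2 + 1 = ((d : ℝ) + 1) / 2 := by
    subst hdn; push_cast; ring
  have hπ : Real.sqrt Real.pi ^ d = Real.sqrt Real.pi ^ n * Real.sqrt Real.pi := by
    subst hdn; ring
  have h2d : (0:ℝ) < 2 ^ d := by positivity
  have hΓd1 : Real.Gamma ((d:ℝ) + 1) * Real.sqrt Real.pi =
      Real.Gamma (((d:ℝ) + 1) / 2) * Real.Gamma ((d:ℝ) / 2 + 1) * 2 ^ d := by
    rw [hdup]; field_simp
  have hcc : c = Real.Gamma ((d:ℝ) / 2 + 1) /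
      (Real.sqrt Real.pi * Real.Gamma (((d:ℝ) + 1) / 2)) := by
    rw [hc, div_eq_div_iff (by positivity) (by positivity)]
    linear_combination Real.Gamma (((d:ℝ) + 1) / 2) * hΓd1
  rw [hnd, hπ, hcc]
  field_simp

lemma qu_Vval (d : ℕ) (hd : 1 ≤ d) (a : ℝ) (ha : 0 < a) (V : ℝ)
    (hV : V = (volume (Metric.closedBall (0 : EuclideanSpace ℝ (Fin d)) a)).toReal) :
    V = a ^ d * (Real.sqrt Real.pi ^ d / Real.Gamma ((d : ℝ) / 2 + 1)) := by
  haveI : Nonempty (Fin d) := Fin.pos_iff_nonempty.mp hd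
  rw [hV, EuclideanSpace.volume_closedBall, Fintype.card_fin, ENNReal.toReal_mul,
    ← ENNReal.ofReal_pow ha.le, ENNReal.toReal_ofReal (by positivity),
    ENNReal.toReal_ofReal (by positivity)]

lemma qu_integral (d n : ℕ) (hdn : d = n + 1) (a ν c V : ℝ) (ha : 0 < a)
    (hν₁ : -a ≤ ν) (hν₂ : ν ≤ a)
    (hc : c = Real.Gamma ((d : ℝ) + 1) / (Real.Gamma (((d : ℝ) + 1) / 2) ^ 2 * 2 ^ d))
    (F : ℝ → ℝ)
    (hF : ∀ ν, F ν = ∫ t in (-1 : ℝ)..(ν / a), c * (1 - t ^ 2) ^ (((d : ℝ) - 1) / 2))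
    (hV : V = (volume (Metric.closedBall (0 : EuclideanSpace ℝ (Fin d)) a)).toReal) :
    (∫ t in (-a)..ν, (a ^ 2 - t ^ 2) ^ ((n : ℝ) / 2) *
      (Real.sqrt Real.pi ^ n / Real.Gamma ((n : ℝ) / 2 + 1))) = V * F ν := by
  set κ := Real.sqrt Real.pi ^ n / Real.Gamma ((n : ℝ) / 2 + 1) with hκdef
  have hVval := qu_Vval d (by omega) a ha V hV
  have hκV : κ * (a ^ n * a) = V * c := by
    rw [hκdef, qu_const d n hdn c hc, hVval]
    have : a ^ d = a ^ n * a := by rw [hdn, pow_succ]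
    rw [this]; ring
  have hEx : ((d : ℝ) - 1) / 2 = (n : ℝ) / 2 := by
    rw [hdn]; push_cast; ring
  have heq : Set.EqOn (fun t => (a ^ 2 - t ^ 2) ^ ((n : ℝ) / 2) * κ)
      (fun t => V * c / a * (1 - (t / a) ^ 2) ^ ((n : ℝ) / 2)) (Set.uIcc (-a) ν) := by
    intro t ht
    rw [Set.uIcc_of_le (by linarith)] at ht
    have ht2 : 0 ≤ a ^ 2 - t ^ 2 := by nlinarith [ht.1, ht.2]
    have h1 : 1 - (t / a) ^ 2 = (a ^ 2 - t ^ 2) / a ^ 2 := by field_simp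
    have h2 : ((a : ℝ) ^ 2) ^ ((n : ℝ) / 2) = a ^ n := by
      rw [← Real.rpow_natCast a 2, ← Real.rpow_mul ha.le,
        show ((2 : ℕ) : ℝ) * ((n : ℝ) / 2) = (n : ℝ) by push_cast; ring, Real.rpow_natCast]
    simp only
    rw [h1, Real.div_rpow ht2 (by positivity), h2]
    have han : (0:ℝ) < a ^ n := by positivity
    field_simp
    linear_combination (a ^ 2 - t ^ 2) ^ ((n : ℝ) / 2) * hκV
  rw [intervalIntegral.integral_congr heq]
  have : (∫ t in (-a)..ν, V * c / a * (1 - (t / a) ^ 2) ^ ((n : ℝ) / 2)) =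
      V * c / a * ∫ t in (-a)..ν, (fun s => (1 - s ^ 2) ^ ((n : ℝ) / 2)) (t / a) :=
    intervalIntegral.integral_const_mul _ _
  have hcd := intervalIntegral.integral_comp_div (a := -a) (b := ν)
    (fun s => (1 - s ^ 2) ^ ((n : ℝ) / 2)) ha.ne'
  rw [this, hcd, show (-a) / a = (-1 : ℝ) by field_simp, hF ν, hEx]
  rw [intervalIntegral.integral_const_mul]
  simp only [smul_eq_mul]
  field_simp

lemma qu_cap_eq (d n : ℕ) (hdn : d = n + 1) (a ν c V : ℝ) (ha : 0 < a)
    (hν₁ : -a ≤ ν) (hν₂ : ν ≤ a)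
    (hc : c = Real.Gamma ((d : ℝ) + 1) / (Real.Gamma (((d : ℝ) + 1) / 2) ^ 2 * 2 ^ d))
    (F : ℝ → ℝ)
    (hF : ∀ ν, F ν = ∫ t in (-1 : ℝ)..(ν / a), c * (1 - t ^ 2) ^ (((d : ℝ) - 1) / 2))
    (hV : V = (volume (Metric.closedBall (0 : EuclideanSpace ℝ (Fin d)) a)).toReal)
    (θ : EuclideanSpace ℝ (Fin (n + 1))) (hθ : ‖θ‖ = 1) :
    volume {x : EuclideanSpace ℝ (Fin (n + 1)) | ‖x‖ ≤ a ∧ ⟪x, θ⟫ ≤ ν} =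
      ENNReal.ofReal (V * F ν) := by
  rw [qu_cap_volume n a ν ha hν₁ hν₂ θ hθ]
  set κ := Real.sqrt Real.pi ^ n / Real.Gamma ((n : ℝ) / 2 + 1) with hκdef
  have hκ0 : 0 ≤ κ := by
    rw [hκdef]
    have := Real.Gamma_pos_of_pos (show (0:ℝ) < (n : ℝ) / 2 + 1 by positivity)
    positivity
  set g : ℝ → ℝ := fun t => (a ^ 2 - t ^ 2) ^ ((n : ℝ) / 2) * κ with hgdef
  have hgcont : Continuous g :=
    ((Real.continuous_rpow_const (by positivity)).comp
      (continuous_const.sub (continuous_pow 2))).mul continuous_const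
  haveI : IsFiniteMeasure (volume.restrict (Icc (-a) ν)) :=
    ⟨by rw [Measure.restrict_apply_univ, Real.volume_Icc]; exact ENNReal.ofReal_lt_top⟩
  have hbound : ∀ᵐ t ∂(volume.restrict (Icc (-a) ν)), ‖g t‖ ≤ (a ^ 2) ^ ((n : ℝ) / 2) * κ := by
    rw [ae_restrict_iff' measurableSet_Icc]
    filter_upwards with t ht
    have ht2 : 0 ≤ a ^ 2 - t ^ 2 := by nlinarith [ht.1, ht.2]
    have hle : (a ^ 2 - t ^ 2) ^ ((n : ℝ) / 2) ≤ (a ^ 2) ^ ((n : ℝ) / 2) :=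
      Real.rpow_le_rpow ht2 (by nlinarith) (by positivity)
    rw [hgdef, Real.norm_eq_abs, abs_of_nonneg (by positivity)]
    exact mul_le_mul_of_nonneg_right hle hκ0
  have hint : Integrable g (volume.restrict (Icc (-a) ν)) :=
    ⟨hgcont.measurable.aestronglyMeasurable, HasFiniteIntegral.of_bounded hbound⟩
  have hnn : 0 ≤ᵐ[volume.restrict (Icc (-a) ν)] g := by
    rw [Filter.EventuallyLE, ae_restrict_iff' measurableSet_Icc]
    filter_upwards with t ht
    have ht2 : 0 ≤ a ^ 2 - t ^ 2 := by nlinarith [ht.1, ht.2]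
    exact mul_nonneg (Real.rpow_nonneg ht2 _) hκ0
  rw [← MeasureTheory.ofReal_integral_eq_lintegral_ofReal hint hnn]
  congr 1
  rw [MeasureTheory.integral_Icc_eq_integral_Ioc, ← intervalIntegral.integral_of_le (by linarith)]
  exact qu_integral d n hdn a ν c V ha hν₁ hν₂ hc F hF hV

/-- The transformed index variable `Z_θ = F_d(⟨X, θ⟩)` is quasi-uniform
on `[0,1]`: its law has a Lebesgue density `h` with `c_f ≤ h ≤ C_f` a.e. on `[0,1]`
and `h = 0` a.e. outside `[0,1]`. -/
theorem transformed_variable_quasi_uniform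
    (d : ℕ) (hd : 1 ≤ d) (a : ℝ) (ha : 0 < a)
    (cf Cf : ℝ) (hcf : 0 < cf) (hcfCf : cf ≤ Cf)
    (c : ℝ)
    (hc : c = Real.Gamma ((d : ℝ) + 1) / (Real.Gamma (((d : ℝ) + 1) / 2) ^ 2 * 2 ^ d))
    (F : ℝ → ℝ)
    (hF : ∀ ν, F ν = ∫ t in (-1 : ℝ)..(ν / a), c * (1 - t ^ 2) ^ (((d : ℝ) - 1) / 2))
    (V : ℝ)
    (hV : V = (volume (Metric.closedBall (0 : EuclideanSpace ℝ (Fin d)) a)).toReal)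
    (Ω : Type*) [MeasurableSpace Ω] (P : Measure Ω) [IsProbabilityMeasure P]
    (X : Ω → EuclideanSpace ℝ (Fin d)) (hX : Measurable X)
    (f : EuclideanSpace ℝ (Fin d) → ℝ)
    (hlaw : Measure.map X P = volume.withDensity (fun x => ENNReal.ofReal (f x)))
    (hf0 : ∀ x, a < ‖x‖ → f x = 0)
    (hfb : ∀ x, ‖x‖ ≤ a → cf / V ≤ f x ∧ f x ≤ Cf / V)
    (θ : EuclideanSpace ℝ (Fin d)) (hθ : ‖θ‖ = 1) :
    ∃ h : ℝ → ℝ,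
      Measure.map (fun ω => F ⟪X ω, θ⟫) P =
          volume.withDensity (fun z => ENNReal.ofReal (h z)) ∧
        ∀ᵐ z : ℝ, (z ∈ Set.Icc (0 : ℝ) 1 → cf ≤ h z ∧ h z ≤ Cf) ∧
          (z ∉ Set.Icc (0 : ℝ) 1 → h z = 0) := by
  obtain ⟨m, rfl⟩ : ∃ m, d = m + 1 := ⟨d - 1, by omega⟩
  set B : Set (EuclideanSpace ℝ (Fin (m + 1))) :=
    Metric.closedBall (0 : EuclideanSpace ℝ (Fin (m + 1))) a with hB
  have hCf : 0 < Cf := lt_of_lt_of_le hcf hcfCf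
  -- basic facts about the ball
  have hBfin : volume B ≠ ⊤ := measure_closedBall_lt_top.ne
  have hBpos : volume B ≠ 0 := by
    refine (lt_of_lt_of_le ?_ (measure_mono Metric.ball_subset_closedBall)).ne'
    exact Metric.measure_ball_pos volume (0 : EuclideanSpace ℝ (Fin (m + 1))) ha
  have hVpos : 0 < V := by
    rw [hV]
    exact ENNReal.toReal_pos hBpos hBfin
  have hVB : ENNReal.ofReal V = volume B := by
    rw [hV]; exact ENNReal.ofReal_toReal hBfin
  -- exponent
  have he : 0 ≤ (((m + 1 : ℕ) : ℝ) - 1) / 2 := by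
    have : (1 : ℝ) ≤ ((m + 1 : ℕ) : ℝ) := by exact_mod_cast hd
    linarith
  -- the integrand of F
  set g : ℝ → ℝ := fun t => c * (1 - t ^ 2) ^ ((((m + 1 : ℕ) : ℝ) - 1) / 2) with hgdef
  have hgcont : Continuous g :=
    continuous_const.mul ((Real.continuous_rpow_const he).comp
      (continuous_const.sub (continuous_pow 2)))
  have hc0 : 0 < c := by
    rw [hc]
    have h1 : 0 < Real.Gamma (((m + 1 : ℕ) : ℝ) + 1) := Real.Gamma_pos_of_pos (by positivity)
    have h2 : 0 < Real.Gamma ((((m + 1 : ℕ) : ℝ) + 1) / 2) := Real.Gamma_pos_of_pos (by positivity)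
    positivity
  -- F is continuous
  have hFeq : F = fun ν => ∫ t in (-1 : ℝ)..(ν / a), g t := funext hF
  have hFcont : Continuous F := by
    rw [hFeq]
    exact (intervalIntegral.continuous_primitive
      (fun p q => hgcont.intervalIntegrable p q) (-1)).comp (continuous_id.div_const a)
  -- strict monotonicity on [-a, a]
  have hFlt : ∀ x y, x ∈ Icc (-a) a → y ∈ Icc (-a) a → x < y → F x < F y := by
    intro x y hx hy hxy
    have hxa : x / a < y / a := by gcongr
    have hdiff : F y - F x = ∫ t in (x / a)..(y / a), g t := by
      rw [hF x, hF y]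
      exact intervalIntegral.integral_interval_sub_left (hgcont.intervalIntegrable _ _)
        (hgcont.intervalIntegrable _ _)
    have hxm : -1 ≤ x / a := by rw [le_div_iff₀ ha]; nlinarith [hx.1]
    have hym : y / a ≤ 1 := by rw [div_le_one ha]; exact hy.2
    have hpos : 0 < ∫ t in (x / a)..(y / a), g t := by
      apply intervalIntegral.intervalIntegral_pos_of_pos_on (hgcont.intervalIntegrable _ _)
        _ hxa
      intro u hu
      have h1 : -1 < u := lt_of_le_of_lt hxm hu.1
      have h2 : u < 1 := lt_of_lt_of_le hu.2 hym
      have : 0 < 1 - u ^ 2 := by nlinarith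
      exact mul_pos hc0 (Real.rpow_pos_of_pos this _)
    linarith
  have hFmono : ∀ x y, x ∈ Icc (-a) a → y ∈ Icc (-a) a → x ≤ y → F x ≤ F y := by
    intro x y hx hy hxy
    rcases eq_or_lt_of_le hxy with rfl | hlt
    · exact le_rfl
    · exact (hFlt x y hx hy hlt).le
  have hFnn : ∀ ν, ν ∈ Icc (-a) a → 0 ≤ F ν := by
    intro ν hν
    rw [hF ν]
    have h1 : (-1 : ℝ) ≤ ν / a := by rw [le_div_iff₀ ha]; nlinarith [hν.1]
    apply intervalIntegral.integral_nonneg h1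
    intro u hu
    have h2 : u ^ 2 ≤ 1 := by
      have : u ≤ 1 := le_trans hu.2 (by rw [div_le_one ha]; exact hν.2)
      nlinarith [hu.1]
    exact mul_nonneg hc0.le (Real.rpow_nonneg (by linarith) _)
  have hFm : F (-a) = 0 := by
    rw [hF (-a), show -a / a = (-1 : ℝ) by field_simp, intervalIntegral.integral_same]
  -- the cap volume identity
  have hcap : ∀ ν, -a ≤ ν → ν ≤ a →
      volume {x : EuclideanSpace ℝ (Fin (m + 1)) | ‖x‖ ≤ a ∧ ⟪x, θ⟫ ≤ ν} =
        ENNReal.ofReal (V * F ν) := by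
    intro ν h1 h2
    exact qu_cap_eq (m + 1) m rfl a ν c V ha h1 h2 hc F hF hV θ hθ
  have hSa : {x : EuclideanSpace ℝ (Fin (m + 1)) | ‖x‖ ≤ a ∧ ⟪x, θ⟫ ≤ a} = B := by
    ext x
    simp only [Set.mem_setOf_eq, hB, Metric.mem_closedBall, dist_zero_right]
    constructor
    · exact fun h => h.1
    · intro h
      refine ⟨h, ?_⟩
      calc ⟪x, θ⟫ ≤ ‖x‖ * ‖θ‖ := real_inner_le_norm x θ
        _ = ‖x‖ := by rw [hθ, mul_one]
        _ ≤ a := h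
  have hFa : F a = 1 := by
    have h1 := hcap a (by linarith) le_rfl
    rw [hSa, ← hVB] at h1
    have h2 : V * F a = V := by
      have h3 := (ENNReal.ofReal_eq_ofReal_iff hVpos.le
        (mul_nonneg hVpos.le (hFnn a ⟨by linarith, le_rfl⟩))).mp h1
      linarith [h3]
    have := mul_left_cancel₀ hVpos.ne' (h2.trans (mul_one V).symm)
    exact this
  -- the transformation map
  set T : EuclideanSpace ℝ (Fin (m + 1)) → ℝ := fun x => F ⟪x, θ⟫ with hT
  have hTc : Continuous T := hFcont.comp (continuous_id.inner continuous_const)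
  have hTm : Measurable T := hTc.measurable
  -- uniform pushforward of the restricted volume
  haveI hfinB : IsFiniteMeasure (volume.restrict B) :=
    ⟨by rw [Measure.restrict_apply_univ]; exact lt_top_iff_ne_top.mpr hBfin⟩
  haveI : IsFiniteMeasure (Measure.map T (volume.restrict B)) :=
    Measure.isFiniteMeasure_map _ _
  haveI : IsFiniteMeasure ((ENNReal.ofReal V) • volume.restrict (Icc (0:ℝ) 1)) := by
    constructor
    rw [Measure.smul_apply, smul_eq_mul, Measure.restrict_apply_univ]
    exact ENNReal.mul_lt_top ENNReal.ofReal_lt_top (by rw [Real.volume_Icc]; exact ENNReal.ofReal_lt_top)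
  have hMap : Measure.map T (volume.restrict B) =
      (ENNReal.ofReal V) • volume.restrict (Icc (0:ℝ) 1) := by
    apply Measure.ext_of_Iic
    intro z
    rw [Measure.map_apply hTm measurableSet_Iic,
      Measure.restrict_apply (hTm measurableSet_Iic), Measure.smul_apply,
      Measure.restrict_apply measurableSet_Iic, smul_eq_mul]
    rcases lt_or_ge z 0 with hz | hz0
    · have h1 : T ⁻¹' Iic z ∩ B = ∅ := by
        apply Set.eq_empty_iff_forall_notMem.mpr
        intro x ⟨hx1, hx2⟩
        have hxb : ‖x‖ ≤ a := by rwa [hB, Metric.mem_closedBall, dist_zero_right] at hx2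
        have hin : ⟪x, θ⟫ ∈ Icc (-a) a := by
          have habs := abs_real_inner_le_norm x θ
          rw [hθ, mul_one] at habs
          have h5 := abs_le.mp (le_trans habs hxb)
          exact ⟨h5.1, h5.2⟩
        have hx1' : F ⟪x, θ⟫ ≤ z := hx1
        linarith [hFnn _ hin]
      have h2 : Iic z ∩ Icc (0:ℝ) 1 = ∅ := by
        apply Set.eq_empty_iff_forall_notMem.mpr
        intro w ⟨hw1, hw2⟩
        have : w ≤ z := hw1
        linarith [hw2.1]
      rw [h1, h2]; simp
    · rcases le_or_gt z 1 with hz1 | hz1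
      · -- 0 ≤ z ≤ 1 : find ν₀ with F ν₀ = z
        have hmem : z ∈ Icc (F (-a)) (F a) := by rw [hFm, hFa]; exact ⟨hz0, hz1⟩
        obtain ⟨ν₀, hν₀mem, hν₀⟩ := intermediate_value_Icc (by linarith : -a ≤ a)
          hFcont.continuousOn hmem
        have hset : T ⁻¹' Iic z ∩ B =
            {x : EuclideanSpace ℝ (Fin (m + 1)) | ‖x‖ ≤ a ∧ ⟪x, θ⟫ ≤ ν₀} := by
          ext x
          simp only [Set.mem_inter_iff, Set.mem_preimage, Set.mem_setOf_eq, mem_Iic, hB,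
            Metric.mem_closedBall, dist_zero_right]
          constructor
          · intro ⟨hx1, hx2⟩
            refine ⟨hx2, ?_⟩
            have hin : ⟪x, θ⟫ ∈ Icc (-a) a := by
              have habs := abs_real_inner_le_norm x θ
              rw [hθ, mul_one] at habs
              have h5 := abs_le.mp (le_trans habs hx2)
              exact ⟨h5.1, h5.2⟩
            by_contra hcon
            push_neg at hcon
            have : F ν₀ < F ⟪x, θ⟫ := hFlt _ _ hν₀mem hin hcon
            have hTx : F ⟪x, θ⟫ ≤ z := hx1
            rw [hν₀] at this
            linarith
          · intro ⟨hx1, hx2⟩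
            refine ⟨?_, hx1⟩
            have hin : ⟪x, θ⟫ ∈ Icc (-a) a := by
              have habs := abs_real_inner_le_norm x θ
              rw [hθ, mul_one] at habs
              have h5 := abs_le.mp (le_trans habs hx1)
              exact ⟨h5.1, h5.2⟩
            show F ⟪x, θ⟫ ≤ z
            rw [← hν₀]
            exact hFmono _ _ hin hν₀mem hx2
        rw [hset, hcap ν₀ hν₀mem.1 hν₀mem.2, hν₀]
        have h2 : Iic z ∩ Icc (0:ℝ) 1 = Icc 0 z := by
          ext w
          simp only [Set.mem_inter_iff, mem_Iic, mem_Icc]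
          constructor
          · intro ⟨h1, h2, h3⟩; exact ⟨h2, h1⟩
          · intro ⟨h1, h2⟩; exact ⟨h2, h1, le_trans h2 hz1⟩
        rw [h2, Real.volume_Icc, ← ENNReal.ofReal_mul hVpos.le]
        norm_num
      · -- z > 1
        have hset : T ⁻¹' Iic z ∩ B = B := by
          apply Set.inter_eq_right.mpr
          intro x hx
          have hxb : ‖x‖ ≤ a := by rwa [hB, Metric.mem_closedBall, dist_zero_right] at hx
          have hin : ⟪x, θ⟫ ∈ Icc (-a) a := by
            have habs := abs_real_inner_le_norm x θ
            rw [hθ, mul_one] at habs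
            have h5 := abs_le.mp (le_trans habs hxb)
            exact ⟨h5.1, h5.2⟩
          show T x ∈ Iic z
          have : F ⟪x, θ⟫ ≤ F a := hFmono _ _ hin ⟨by linarith, le_rfl⟩ hin.2
          rw [hFa] at this
          exact le_trans this hz1.le
        have h2 : Iic z ∩ Icc (0:ℝ) 1 = Icc 0 1 := by
          apply Set.inter_eq_right.mpr
          intro w hw
          exact le_trans hw.2 hz1.le
        rw [hset, h2, Real.volume_Icc, ← hVB]
        norm_num
  -- the law of the transformed variable
  set μ : Measure ℝ := Measure.map T (volume.withDensity fun x => ENNReal.ofReal (f x))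
    with hμdef
  have hmain : Measure.map (fun ω => F ⟪X ω, θ⟫) P = μ := by
    have hcomp : (fun ω => F ⟪X ω, θ⟫) = T ∘ X := rfl
    rw [hcomp, ← Measure.map_map hTm hX, hlaw]
  have hμapp : ∀ A : Set ℝ, MeasurableSet A →
      μ A = ∫⁻ x in T ⁻¹' A, ENNReal.ofReal (f x) ∂volume := by
    intro A hA
    rw [hμdef, Measure.map_apply hTm hA, withDensity_apply _ (hTm hA)]
  -- upper bound
  have hub : ∀ A : Set ℝ, MeasurableSet A →
      μ A ≤ ENNReal.ofReal Cf * volume (A ∩ Icc (0:ℝ) 1) := by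
    intro A hA
    rw [hμapp A hA]
    have hpt : ∀ x, ENNReal.ofReal (f x) ≤
        B.indicator (fun _ => ENNReal.ofReal (Cf / V)) x := by
      intro x
      by_cases hx : x ∈ B
      · rw [Set.indicator_of_mem hx]
        have hxb : ‖x‖ ≤ a := by rwa [hB, Metric.mem_closedBall, dist_zero_right] at hx
        exact ENNReal.ofReal_le_ofReal (hfb x hxb).2
      · rw [Set.indicator_of_notMem hx]
        have hxb : a < ‖x‖ := by
          rw [hB, Metric.mem_closedBall, dist_zero_right] at hx
          exact lt_of_not_ge hx
        rw [hf0 x hxb]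
        simp
    calc ∫⁻ x in T ⁻¹' A, ENNReal.ofReal (f x) ∂volume
        ≤ ∫⁻ x in T ⁻¹' A, B.indicator (fun _ => ENNReal.ofReal (Cf / V)) x ∂volume :=
          lintegral_mono hpt
      _ = ENNReal.ofReal (Cf / V) * volume (B ∩ T ⁻¹' A) := by
          rw [lintegral_indicator measurableSet_closedBall,
            Measure.restrict_restrict measurableSet_closedBall, setLIntegral_const]
      _ = ENNReal.ofReal (Cf / V) * Measure.map T (volume.restrict B) A := by
          rw [Measure.map_apply hTm hA, Measure.restrict_apply (hTm hA), Set.inter_comm]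
      _ = ENNReal.ofReal (Cf / V) * (ENNReal.ofReal V * volume (A ∩ Icc (0:ℝ) 1)) := by
          rw [hMap, Measure.smul_apply, Measure.restrict_apply hA, smul_eq_mul]
      _ = ENNReal.ofReal Cf * volume (A ∩ Icc (0:ℝ) 1) := by
          rw [← mul_assoc, ← ENNReal.ofReal_mul (by positivity), div_mul_cancel₀ _ hVpos.ne']
  -- lower bound
  have hlb : ∀ A : Set ℝ, MeasurableSet A →
      ENNReal.ofReal cf * volume (A ∩ Icc (0:ℝ) 1) ≤ μ A := by
    intro A hA
    rw [hμapp A hA]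
    have hpt : ∀ x, B.indicator (fun _ => ENNReal.ofReal (cf / V)) x ≤
        ENNReal.ofReal (f x) := by
      intro x
      by_cases hx : x ∈ B
      · rw [Set.indicator_of_mem hx]
        have hxb : ‖x‖ ≤ a := by rwa [hB, Metric.mem_closedBall, dist_zero_right] at hx
        exact ENNReal.ofReal_le_ofReal (hfb x hxb).1
      · rw [Set.indicator_of_notMem hx]
        exact zero_le
    calc ENNReal.ofReal cf * volume (A ∩ Icc (0:ℝ) 1)
        = ENNReal.ofReal (cf / V) * (ENNReal.ofReal V * volume (A ∩ Icc (0:ℝ) 1)) := by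
          rw [← mul_assoc, ← ENNReal.ofReal_mul (by positivity), div_mul_cancel₀ _ hVpos.ne']
      _ = ENNReal.ofReal (cf / V) * Measure.map T (volume.restrict B) A := by
          rw [hMap, Measure.smul_apply, Measure.restrict_apply hA, smul_eq_mul]
      _ = ENNReal.ofReal (cf / V) * volume (B ∩ T ⁻¹' A) := by
          rw [Measure.map_apply hTm hA, Measure.restrict_apply (hTm hA), Set.inter_comm]
      _ = ∫⁻ x in T ⁻¹' A, B.indicator (fun _ => ENNReal.ofReal (cf / V)) x ∂volume := by
          rw [lintegral_indicator measurableSet_closedBall,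
            Measure.restrict_restrict measurableSet_closedBall, setLIntegral_const]
      _ ≤ ∫⁻ x in T ⁻¹' A, ENNReal.ofReal (f x) ∂volume := lintegral_mono hpt
  -- absolute continuity and finiteness
  have hac : μ ≪ volume := by
    apply Measure.AbsolutelyContinuous.mk
    intro A hA hA0
    refine le_antisymm ?_ (zero_le)
    calc μ A ≤ ENNReal.ofReal Cf * volume (A ∩ Icc (0:ℝ) 1) := hub A hA
      _ ≤ ENNReal.ofReal Cf * volume A :=
          mul_le_mul_right (measure_mono Set.inter_subset_left) _
      _ = 0 := by rw [hA0, mul_zero]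
  haveI : IsFiniteMeasure μ := by
    constructor
    calc μ univ ≤ ENNReal.ofReal Cf * volume (univ ∩ Icc (0:ℝ) 1) :=
        hub univ MeasurableSet.univ
      _ < ⊤ := ENNReal.mul_lt_top ENNReal.ofReal_lt_top
          (lt_of_le_of_lt (measure_mono Set.inter_subset_right)
            (by rw [Real.volume_Icc]; exact ENNReal.ofReal_lt_top))
  -- Radon–Nikodym derivative
  set ρ : ℝ → ENNReal := μ.rnDeriv volume with hρdef
  have hρm : Measurable ρ := Measure.measurable_rnDeriv μ volume
  have hρint : ∀ A : Set ℝ, MeasurableSet A → ∫⁻ z in A, ρ z ∂volume = μ A := by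
    intro A hA
    exact Measure.setLIntegral_rnDeriv hac A
  have hρlt : ∀ᵐ z : ℝ ∂volume, ρ z < ⊤ := Measure.rnDeriv_lt_top μ volume
  -- a.e. upper bound on [0,1]
  have hupper : ∀ᵐ z : ℝ ∂volume, z ∈ Icc (0:ℝ) 1 → ρ z ≤ ENNReal.ofReal Cf := by
    rw [← ae_restrict_iff' measurableSet_Icc]
    apply ae_le_of_forall_setLIntegral_le_of_sigmaFinite₀ hρm.aemeasurable
    intro s hs _
    rw [Measure.restrict_restrict hs, hρint _ (hs.inter measurableSet_Icc),
      setLIntegral_const]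
    calc μ (s ∩ Icc (0:ℝ) 1)
        ≤ ENNReal.ofReal Cf * volume ((s ∩ Icc (0:ℝ) 1) ∩ Icc (0:ℝ) 1) :=
          hub _ (hs.inter measurableSet_Icc)
      _ = ENNReal.ofReal Cf * volume (s ∩ Icc (0:ℝ) 1) := by
          rw [Set.inter_assoc, Set.inter_self]
  -- a.e. lower bound on [0,1]
  have hlower : ∀ᵐ z : ℝ ∂volume, z ∈ Icc (0:ℝ) 1 → ENNReal.ofReal cf ≤ ρ z := by
    rw [← ae_restrict_iff' measurableSet_Icc]
    apply ae_le_of_forall_setLIntegral_le_of_sigmaFinite₀ measurable_const.aemeasurable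
    intro s hs _
    rw [Measure.restrict_restrict hs, hρint _ (hs.inter measurableSet_Icc),
      setLIntegral_const]
    calc ENNReal.ofReal cf * volume (s ∩ Icc (0:ℝ) 1)
        = ENNReal.ofReal cf * volume ((s ∩ Icc (0:ℝ) 1) ∩ Icc (0:ℝ) 1) := by
          rw [Set.inter_assoc, Set.inter_self]
      _ ≤ μ (s ∩ Icc (0:ℝ) 1) := hlb _ (hs.inter measurableSet_Icc)
  -- a.e. zero outside [0,1]
  have houter : ∀ᵐ z : ℝ ∂volume, z ∉ Icc (0:ℝ) 1 → ρ z = 0 := by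
    have h0 : ∀ᵐ z : ℝ ∂volume, z ∈ (Icc (0:ℝ) 1)ᶜ → ρ z ≤ 0 := by
      rw [← ae_restrict_iff' measurableSet_Icc.compl]
      apply ae_le_of_forall_setLIntegral_le_of_sigmaFinite₀ hρm.aemeasurable
      intro s hs _
      rw [Measure.restrict_restrict hs, hρint _ (hs.inter measurableSet_Icc.compl)]
      have : μ (s ∩ (Icc (0:ℝ) 1)ᶜ) = 0 := by
        refine le_antisymm ?_ (zero_le)
        calc μ (s ∩ (Icc (0:ℝ) 1)ᶜ)
            ≤ ENNReal.ofReal Cf * volume ((s ∩ (Icc (0:ℝ) 1)ᶜ) ∩ Icc (0:ℝ) 1) :=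
              hub _ (hs.inter measurableSet_Icc.compl)
          _ = 0 := by
              rw [Set.inter_assoc, Set.compl_inter_self, Set.inter_empty, measure_empty,
                mul_zero]
      rw [this]
      exact zero_le
    filter_upwards [h0] with z hz hznot
    exact le_antisymm (hz hznot) (zero_le)
  -- define the density
  refine ⟨fun z => (ρ z).toReal, ?_, ?_⟩
  · rw [hmain]
    have hcongr : (fun z => ENNReal.ofReal ((ρ z).toReal)) =ᵐ[volume] ρ := by
      filter_upwards [hρlt] with z hz
      exact ENNReal.ofReal_toReal hz.ne
    rw [withDensity_congr_ae hcongr]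
    exact (Measure.withDensity_rnDeriv_eq μ volume hac).symm
  · filter_upwards [hupper, hlower, houter, hρlt] with z h1 h2 h3 h4
    constructor
    · intro hz
      constructor
      · have := ENNReal.toReal_mono h4.ne (h2 hz)
        rwa [ENNReal.toReal_ofReal hcf.le] at this
      · have := ENNReal.toReal_mono ENNReal.ofReal_ne_top (h1 hz)
        rwa [ENNReal.toReal_ofReal hCf.le] at this
    · intro hz
      rw [h3 hz]
      simp
end

section
/- Let p be a sampling design on the finite population U = {1,…,N} with inclusion probabilities satisfying π_i ≥ λ for all i ∈ U, where λ > 0, and let Δ = max_{i≠j} |π_ij − π_i π_j|. Then for any real numbers d_1,…,d_N, Σ_{i∈U} Σ_{j∈U} (π_ij − π_i π_j)(d_i/π_i)(d_j/π_j) ≤ (1/λ + NΔ/λ²) · Σ_{i∈U} d_i². In particular, Var_p( Σ_{i∈s} d_i/π_i ) ≤ (1/λ + NΔ/λ²) Σ_{i∈U} d_i². -/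
open Finset

/-- Bound on the Horvitz–Thompson variance quadratic form:
if `π_i ≥ λ > 0` and `|π_ij − π_i π_j| ≤ Δ` for `i ≠ j`, then
`Σ_i Σ_j (π_ij − π_i π_j)(d_i/π_i)(d_j/π_j) ≤ (1/λ + NΔ/λ²) Σ_i d_i²`, and in
particular the design variance of `Σ_{i∈s} d_i/π_i` obeys the same bound. -/
theorem ht_variance_bound
    (N : ℕ) (p : Finset (Fin N) → ℝ)
    (hp : ∀ s, 0 ≤ p s) (hsum : ∑ s : Finset (Fin N), p s = 1)
    (π : Fin N → ℝ) (ππ : Fin N → Fin N → ℝ)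
    (hπ : ∀ i, π i = ∑ s : Finset (Fin N), if i ∈ s then p s else 0)
    (hππ : ∀ i j, ππ i j = ∑ s : Finset (Fin N), if i ∈ s ∧ j ∈ s then p s else 0)
    (lam : ℝ) (hlam : 0 < lam) (hπlam : ∀ i, lam ≤ π i)
    (Δ : ℝ) (hΔ0 : 0 ≤ Δ) (hΔ : ∀ i j, i ≠ j → |ππ i j - π i * π j| ≤ Δ)
    (d : Fin N → ℝ) :
    (∑ i : Fin N, ∑ j : Fin N, (ππ i j - π i * π j) * (d i / π i) * (d j / π j)
        ≤ (1 / lam + N * Δ / lam ^ 2) * ∑ i : Fin N, d i ^ 2) ∧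
      ∑ s : Finset (Fin N),
          p s * ((∑ i ∈ s, d i / π i) - ∑ s' : Finset (Fin N), p s' * ∑ i ∈ s', d i / π i) ^ 2
        ≤ (1 / lam + N * Δ / lam ^ 2) * ∑ i : Fin N, d i ^ 2 := by
  have hπpos : ∀ i, 0 < π i := fun i => lt_of_lt_of_le hlam (hπlam i)
  set a : Fin N → ℝ := fun i => d i / π i with ha
  have hda : ∀ i, π i * a i = d i := fun i => by
    simp only [ha]
    rw [mul_comm]
    exact div_mul_cancel₀ (d i) (hπpos i).ne'
  have hdiag : ∀ i, ππ i i = π i := fun i => by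
    rw [hππ, hπ]; simp
  have habs : ∀ i, |a i| ≤ |d i| / lam := by
    intro i
    rw [ha, abs_div, abs_of_pos (hπpos i)]
    exact div_le_div_of_nonneg_left (abs_nonneg _) hlam (hπlam i)
  have hsq : (∑ i : Fin N, |d i|) ^ 2 ≤ N * ∑ i : Fin N, d i ^ 2 := by
    have := sq_sum_le_card_mul_sum_sq (s := (univ : Finset (Fin N))) (f := fun i => |d i|)
    simpa [sq_abs] using this
  -- main quadratic form bound
  have hQ : ∑ i : Fin N, ∑ j : Fin N, (ππ i j - π i * π j) * a i * a j
      ≤ (1 / lam + N * Δ / lam ^ 2) * ∑ i : Fin N, d i ^ 2 := by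
    have hsplit : ∑ i : Fin N, ∑ j : Fin N, (ππ i j - π i * π j) * a i * a j
        = (∑ i : Fin N, (ππ i i - π i * π i) * a i * a i)
          + ∑ i : Fin N, ∑ j ∈ univ.erase i, (ππ i j - π i * π j) * a i * a j := by
      rw [← Finset.sum_add_distrib]
      exact Finset.sum_congr rfl fun i _ =>
        (Finset.add_sum_erase univ _ (mem_univ i)).symm
    have hDiag : ∑ i : Fin N, (ππ i i - π i * π i) * a i * a i
        ≤ (1 / lam) * ∑ i : Fin N, d i ^ 2 := by
      rw [Finset.mul_sum]
      refine Finset.sum_le_sum fun i _ => ?_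
      have hπi := hπpos i
      have h1 : (ππ i i - π i * π i) * a i * a i = (1 - π i) * (d i ^ 2 / π i) := by
        rw [hdiag i, ha]; field_simp
      rw [h1]
      have h2 : (1 - π i) * (d i ^ 2 / π i) ≤ d i ^ 2 / π i := by
        nlinarith [sq_nonneg (d i), div_nonneg (sq_nonneg (d i)) hπi.le,
          mul_nonneg (hπi.le) (div_nonneg (sq_nonneg (d i)) hπi.le)]
      refine h2.trans ?_
      rw [one_div, inv_mul_eq_div]
      exact div_le_div_of_nonneg_left (sq_nonneg _) hlam (hπlam i)
    have hOff : ∑ i : Fin N, ∑ j ∈ univ.erase i, (ππ i j - π i * π j) * a i * a j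
        ≤ (↑N * Δ / lam ^ 2) * ∑ i : Fin N, d i ^ 2 := by
      have step1 : ∑ i : Fin N, ∑ j ∈ univ.erase i, (ππ i j - π i * π j) * a i * a j
          ≤ ∑ i : Fin N, ∑ j ∈ univ.erase i, (Δ / lam ^ 2) * (|d i| * |d j|) := by
        refine Finset.sum_le_sum fun i _ => Finset.sum_le_sum fun j hj => ?_
        have hij : j ≠ i := Finset.ne_of_mem_erase hj
        have : (ππ i j - π i * π j) * a i * a j ≤ |ππ i j - π i * π j| * |a i| * |a j| := by
          calc (ππ i j - π i * π j) * a i * a j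
              ≤ |(ππ i j - π i * π j) * a i * a j| := le_abs_self _
            _ = |ππ i j - π i * π j| * |a i| * |a j| := by rw [abs_mul, abs_mul]
        refine this.trans ?_
        have h1 : |ππ i j - π i * π j| * |a i| * |a j|
            ≤ Δ * (|d i| / lam) * (|d j| / lam) := by
          have h2 := hΔ i j (Ne.symm hij)
          have h3 := habs i
          have h4 := habs j
          have hai : (0:ℝ) ≤ |a i| := abs_nonneg _
          have haj : (0:ℝ) ≤ |a j| := abs_nonneg _
          have hdi : (0:ℝ) ≤ |d i| / lam := le_trans hai h3
          exact mul_le_mul (mul_le_mul h2 h3 hai (le_trans (abs_nonneg _) h2)) h4 haj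
            (mul_nonneg (le_trans (abs_nonneg _) h2) hdi)
        refine h1.trans_eq ?_
        ring
      refine step1.trans ?_
      have step2 : ∑ i : Fin N, ∑ j ∈ univ.erase i, (Δ / lam ^ 2) * (|d i| * |d j|)
          ≤ ∑ i : Fin N, ∑ j : Fin N, (Δ / lam ^ 2) * (|d i| * |d j|) := by
        refine Finset.sum_le_sum fun i _ => ?_
        refine Finset.sum_le_sum_of_subset_of_nonneg (Finset.erase_subset i univ)
          fun j _ _ => ?_
        positivity
      refine step2.trans ?_
      have hss : ∑ i : Fin N, ∑ j : Fin N, |d i| * |d j| = (∑ i : Fin N, |d i|) ^ 2 := by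
        rw [sq]
        exact (Finset.sum_mul_sum _ _ _ _).symm
      have step3 : ∑ i : Fin N, ∑ j : Fin N, (Δ / lam ^ 2) * (|d i| * |d j|)
          = (Δ / lam ^ 2) * (∑ i : Fin N, |d i|) ^ 2 := by
        rw [← hss, Finset.mul_sum]
        exact Finset.sum_congr rfl fun i _ => by rw [Finset.mul_sum]
      rw [step3]
      have : (Δ / lam ^ 2) * (∑ i : Fin N, |d i|) ^ 2
          ≤ (Δ / lam ^ 2) * (N * ∑ i : Fin N, d i ^ 2) := by
        exact mul_le_mul_of_nonneg_left hsq (by positivity)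
      refine this.trans_eq ?_
      ring
    rw [hsplit]
    calc (∑ i : Fin N, (ππ i i - π i * π i) * a i * a i)
          + ∑ i : Fin N, ∑ j ∈ univ.erase i, (ππ i j - π i * π j) * a i * a j
        ≤ (1 / lam) * ∑ i : Fin N, d i ^ 2 + (↑N * Δ / lam ^ 2) * ∑ i : Fin N, d i ^ 2 :=
          add_le_add hDiag hOff
      _ = (1 / lam + ↑N * Δ / lam ^ 2) * ∑ i : Fin N, d i ^ 2 := by ring
  -- expectation of HT estimator
  have hμ : ∑ s : Finset (Fin N), p s * ∑ i ∈ s, a i = ∑ i : Fin N, d i := by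
    calc ∑ s : Finset (Fin N), p s * ∑ i ∈ s, a i
        = ∑ s : Finset (Fin N), ∑ i : Fin N, (if i ∈ s then p s * a i else 0) := by
          refine Finset.sum_congr rfl fun s _ => ?_
          rw [Finset.mul_sum, Finset.sum_ite_mem, univ_inter]
      _ = ∑ i : Fin N, ∑ s : Finset (Fin N), (if i ∈ s then p s * a i else 0) :=
          Finset.sum_comm
      _ = ∑ i : Fin N, (∑ s : Finset (Fin N), if i ∈ s then p s else 0) * a i := by
          refine Finset.sum_congr rfl fun i _ => ?_
          rw [Finset.sum_mul]
          exact Finset.sum_congr rfl fun s _ => by split <;> simp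
      _ = ∑ i : Fin N, π i * a i := by
          exact Finset.sum_congr rfl fun i _ => by rw [← hπ]
      _ = ∑ i : Fin N, d i := Finset.sum_congr rfl fun i _ => hda i
  -- second moment
  have hE2 : ∑ s : Finset (Fin N), p s * (∑ i ∈ s, a i) ^ 2
      = ∑ i : Fin N, ∑ j : Fin N, ππ i j * a i * a j := by
    have hext : ∀ (s : Finset (Fin N)) (f : Fin N → ℝ),
        ∑ i ∈ s, f i = ∑ i : Fin N, if i ∈ s then f i else 0 := fun s f => by
      rw [Finset.sum_ite_mem, univ_inter]
    calc ∑ s : Finset (Fin N), p s * (∑ i ∈ s, a i) ^ 2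
        = ∑ s : Finset (Fin N), ∑ i : Fin N, ∑ j : Fin N,
            (if i ∈ s ∧ j ∈ s then p s else 0) * a i * a j := by
          refine Finset.sum_congr rfl fun s _ => ?_
          calc p s * (∑ i ∈ s, a i) ^ 2
              = ∑ i ∈ s, ∑ j ∈ s, p s * a i * a j := by
                rw [sq, Finset.sum_mul_sum, Finset.mul_sum]
                exact Finset.sum_congr rfl fun i _ => by
                  rw [Finset.mul_sum]
                  exact Finset.sum_congr rfl fun j _ => by ring
            _ = ∑ i : Fin N, if i ∈ s then ∑ j ∈ s, p s * a i * a j else 0 := by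
                rw [hext]
            _ = ∑ i : Fin N, ∑ j : Fin N,
                (if i ∈ s then (if j ∈ s then p s * a i * a j else 0) else 0) := by
                refine Finset.sum_congr rfl fun i _ => ?_
                by_cases hi : i ∈ s
                · simp only [hi, if_true]
                  exact hext s _
                · simp [hi]
            _ = ∑ i : Fin N, ∑ j : Fin N,
                (if i ∈ s ∧ j ∈ s then p s else 0) * a i * a j := by
                refine Finset.sum_congr rfl fun i _ => Finset.sum_congr rfl fun j _ => ?_
                by_cases hi : i ∈ s <;> by_cases hj : j ∈ s <;> simp [hi, hj]
      _ = ∑ i : Fin N, ∑ j : Fin N, ∑ s : Finset (Fin N),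
            (if i ∈ s ∧ j ∈ s then p s else 0) * a i * a j := by
          rw [Finset.sum_comm]
          exact Finset.sum_congr rfl fun i _ => Finset.sum_comm
      _ = ∑ i : Fin N, ∑ j : Fin N, ππ i j * a i * a j := by
          refine Finset.sum_congr rfl fun i _ => Finset.sum_congr rfl fun j _ => ?_
          rw [hππ, Finset.sum_mul, Finset.sum_mul]
  -- quadratic form equals variance
  have hcross : ∑ i : Fin N, ∑ j : Fin N, (π i * π j) * a i * a j
      = (∑ i : Fin N, d i) ^ 2 := by
    rw [sq, Finset.sum_mul_sum]
    refine Finset.sum_congr rfl fun i _ => Finset.sum_congr rfl fun j _ => ?_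
    rw [← hda i, ← hda j]; ring
  have hQeq : ∑ i : Fin N, ∑ j : Fin N, (ππ i j - π i * π j) * a i * a j
      = (∑ s : Finset (Fin N), p s * (∑ i ∈ s, a i) ^ 2) - (∑ i : Fin N, d i) ^ 2 := by
    rw [hE2, ← hcross, ← Finset.sum_sub_distrib]
    refine Finset.sum_congr rfl fun i _ => ?_
    rw [← Finset.sum_sub_distrib]
    exact Finset.sum_congr rfl fun j _ => by ring
  have hVar : ∑ s : Finset (Fin N),
      p s * ((∑ i ∈ s, a i) - ∑ s' : Finset (Fin N), p s' * ∑ i ∈ s', a i) ^ 2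
      = (∑ s : Finset (Fin N), p s * (∑ i ∈ s, a i) ^ 2) - (∑ i : Fin N, d i) ^ 2 := by
    rw [hμ]
    set μ := ∑ i : Fin N, d i with hμdef
    calc ∑ s : Finset (Fin N), p s * ((∑ i ∈ s, a i) - μ) ^ 2
        = ∑ s : Finset (Fin N),
            (p s * (∑ i ∈ s, a i) ^ 2 - 2 * μ * (p s * ∑ i ∈ s, a i) + μ ^ 2 * p s) := by
          exact Finset.sum_congr rfl fun s _ => by ring
      _ = (∑ s : Finset (Fin N), p s * (∑ i ∈ s, a i) ^ 2)
            - 2 * μ * (∑ s : Finset (Fin N), p s * ∑ i ∈ s, a i)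
            + μ ^ 2 * (∑ s : Finset (Fin N), p s) := by
          rw [Finset.sum_add_distrib, Finset.sum_sub_distrib, ← Finset.mul_sum,
            ← Finset.mul_sum]
      _ = (∑ s : Finset (Fin N), p s * (∑ i ∈ s, a i) ^ 2) - μ ^ 2 := by
          rw [hμ, hsum]; ring
  refine ⟨hQ, ?_⟩
  calc ∑ s : Finset (Fin N),
        p s * ((∑ i ∈ s, a i) - ∑ s' : Finset (Fin N), p s' * ∑ i ∈ s', a i) ^ 2
      = ∑ i : Fin N, ∑ j : Fin N, (ππ i j - π i * π j) * a i * a j := by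
        rw [hVar, hQeq]
    _ ≤ (1 / lam + N * Δ / lam ^ 2) * ∑ i : Fin N, d i ^ 2 := hQ
end

section
/- For each N ≥ 1 let p_N be a sampling design on U_N = {1,…,N} with inclusion probabilities π_{i,N} and π_{ij,N}, let n_N be positive reals with n_N/N → π ∈ (0,1) as N → ∞, and let d_{1,N},…,d_{N,N} be real numbers. Assume there is λ > 0 with π_{i,N} ≥ λ for all i and N, that limsup_{N→∞} n_N · max_{i≠j} |π_{ij,N} − π_{i,N} π_{j,N}| < ∞, and that limsup_{N→∞} N^{-1} Σ_{i=1}^N d_{i,N}² < ∞. Then E_{p_N} | N^{-1} Σ_{i=1}^N d_{i,N} ( I_i/π_{i,N} − 1 ) | → 0 as N → ∞, where I_i is the indicator that i belongs to the drawn sample. -/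
open Filter


lemma dlln_cs {α : Type*} [Fintype α] (p : α → ℝ) (hp : ∀ s, 0 ≤ p s)
    (hsum : ∑ s : α, p s = 1) (X : α → ℝ) :
    (∑ s : α, p s * |X s|) ^ 2 ≤ ∑ s : α, p s * X s ^ 2 := by
  have h := Finset.sum_mul_sq_le_sq_mul_sq Finset.univ
    (fun s => Real.sqrt (p s)) (fun s => Real.sqrt (p s) * |X s|)
  have e1 : ∀ s : α, Real.sqrt (p s) * (Real.sqrt (p s) * |X s|) = p s * |X s| := by
    intro s; rw [← mul_assoc, Real.mul_self_sqrt (hp s)]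
  have e3 : ∀ s : α, (Real.sqrt (p s) * |X s|) ^ 2 = p s * X s ^ 2 := by
    intro s; rw [mul_pow, Real.sq_sqrt (hp s), sq_abs]
  simp only [e1, e3, Real.sq_sqrt (hp _), hsum, one_mul] at h
  exact h

lemma dlln_var {N : ℕ} (p : Finset (Fin N) → ℝ)
    (hsum : ∑ s : Finset (Fin N), p s = 1)
    (π : Fin N → ℝ) (hπ : ∀ i, π i = ∑ s : Finset (Fin N), if i ∈ s then p s else 0)
    (ππ : Fin N → Fin N → ℝ)
    (hππ : ∀ i j, ππ i j = ∑ s : Finset (Fin N), if i ∈ s ∧ j ∈ s then p s else 0)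
    (hπ0 : ∀ i, π i ≠ 0) (d : Fin N → ℝ) :
    ∑ s : Finset (Fin N), p s * (∑ i : Fin N, d i * ((if i ∈ s then 1 else 0) / π i - 1)) ^ 2
      = ∑ i : Fin N, ∑ j : Fin N, d i * d j * ((ππ i j - π i * π j) / (π i * π j)) := by
  set g : Fin N → Finset (Fin N) → ℝ :=
    fun i s => (if i ∈ s then (1:ℝ) else 0) / π i - 1 with hg
  have key : ∀ i j : Fin N,
      ∑ s : Finset (Fin N), p s * (g i s * g j s) = (ππ i j - π i * π j) / (π i * π j) := by
    intro i j
    have hi := hπ0 i; have hj := hπ0 j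
    have hterm : ∀ s : Finset (Fin N), p s * (g i s * g j s)
        = (if i ∈ s ∧ j ∈ s then p s else 0) * (π i * π j)⁻¹
          - (if i ∈ s then p s else 0) * (π i)⁻¹ - (if j ∈ s then p s else 0) * (π j)⁻¹
          + p s := by
      intro s
      simp only [hg]
      by_cases h1 : i ∈ s <;> by_cases h2 : j ∈ s <;>
        simp only [h1, h2, if_pos, if_neg, and_true, and_false, true_and, false_and,
          if_true, if_false, not_false_iff] <;> (try field_simp) <;> ring
    rw [Finset.sum_congr rfl fun s _ => hterm s]
    simp only [Finset.sum_add_distrib, Finset.sum_sub_distrib, ← Finset.sum_mul]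
    rw [← hπ i, ← hπ j, ← hππ i j, hsum]
    field_simp
    try ring
  have expand : ∀ s : Finset (Fin N),
      (∑ i : Fin N, d i * g i s) ^ 2
        = ∑ i : Fin N, ∑ j : Fin N, (d i * g i s) * (d j * g j s) := by
    intro s; rw [sq, Finset.sum_mul_sum]
  calc ∑ s : Finset (Fin N), p s * (∑ i : Fin N, d i * g i s) ^ 2
      = ∑ s : Finset (Fin N), ∑ i : Fin N, ∑ j : Fin N,
          p s * ((d i * g i s) * (d j * g j s)) := by
        refine Finset.sum_congr rfl fun s _ => ?_
        rw [expand s, Finset.mul_sum]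
        exact Finset.sum_congr rfl fun i _ => Finset.mul_sum _ _ _
    _ = ∑ i : Fin N, ∑ j : Fin N, ∑ s : Finset (Fin N),
          p s * ((d i * g i s) * (d j * g j s)) := by
        rw [Finset.sum_comm]
        exact Finset.sum_congr rfl fun i _ => Finset.sum_comm
    _ = ∑ i : Fin N, ∑ j : Fin N, d i * d j * ∑ s : Finset (Fin N), p s * (g i s * g j s) := by
        refine Finset.sum_congr rfl fun i _ => Finset.sum_congr rfl fun j _ => ?_
        rw [Finset.mul_sum]
        exact Finset.sum_congr rfl fun s _ => by ring
    _ = _ := by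
        refine Finset.sum_congr rfl fun i _ => Finset.sum_congr rfl fun j _ => ?_
        rw [key i j]

/-- Weak design law of large numbers:
`E_p | N⁻¹ Σ_i d_i (I_i/π_i − 1) | → 0` under the standard design conditions. -/
theorem design_law_of_large_numbers
    (p : (N : ℕ) → Finset (Fin N) → ℝ)
    (hp : ∀ N s, 0 ≤ p N s)
    (hsum : ∀ N, ∑ s : Finset (Fin N), p N s = 1)
    (π : (N : ℕ) → Fin N → ℝ)
    (hπ : ∀ N i, π N i = ∑ s : Finset (Fin N), if i ∈ s then p N s else 0)
    (ππ : (N : ℕ) → Fin N → Fin N → ℝ)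
    (hππ : ∀ N i j, ππ N i j = ∑ s : Finset (Fin N), if i ∈ s ∧ j ∈ s then p N s else 0)
    (n : ℕ → ℝ) (hn : ∀ N, 0 < n N)
    (πl : ℝ) (hπl0 : 0 < πl) (hπl1 : πl < 1)
    (hnN : Tendsto (fun N => n N / N) atTop (nhds πl))
    (lam : ℝ) (hlam : 0 < lam) (hπlam : ∀ N i, lam ≤ π N i)
    (hΔ : ∃ C : ℝ, ∀ᶠ N in atTop, ∀ i j : Fin N, i ≠ j →
        n N * |ππ N i j - π N i * π N j| ≤ C)
    (d : (N : ℕ) → Fin N → ℝ)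
    (hd : ∃ C : ℝ, ∀ᶠ N : ℕ in atTop, (N : ℝ)⁻¹ * ∑ i : Fin N, d N i ^ 2 ≤ C) :
    Tendsto
      (fun N => ∑ s : Finset (Fin N), p N s *
        |(N : ℝ)⁻¹ * ∑ i : Fin N, d N i * ((if i ∈ s then 1 else 0) / π N i - 1)|)
      atTop (nhds 0) := by
  obtain ⟨C, hC⟩ := hΔ
  obtain ⟨Cd, hCd⟩ := hd
  set C' : ℝ := max C 0 with hC'def
  have hC'0 : 0 ≤ C' := le_max_right _ _
  set K : ℝ := (lam * lam)⁻¹ with hKdef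
  have hK0 : 0 ≤ K := by positivity
  set b : ℕ → ℝ := fun N => K * (C' * Cd / n N + Cd / N) with hbdef
  set A : ℕ → ℝ := fun N => ∑ s : Finset (Fin N), p N s *
      |(N : ℝ)⁻¹ * ∑ i : Fin N, d N i * ((if i ∈ s then 1 else 0) / π N i - 1)| with hAdef
  have hNat : Tendsto (fun N : ℕ => (N : ℝ)) atTop atTop := tendsto_natCast_atTop_atTop
  have hnt : Tendsto n atTop atTop := by
    have h1 : ∀ᶠ N : ℕ in atTop, πl / 2 ≤ n N / N :=
      hnN.eventually (eventually_ge_nhds (by linarith))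
    have h2 : Tendsto (fun N : ℕ => πl / 2 * N) atTop atTop :=
      hNat.const_mul_atTop (by linarith)
    refine tendsto_atTop_mono' atTop ?_ h2
    filter_upwards [h1, eventually_gt_atTop 0] with N hN hN0
    have hNpos : (0 : ℝ) < N := by exact_mod_cast hN0
    have := mul_le_mul_of_nonneg_right hN hNpos.le
    calc πl / 2 * N ≤ n N / N * N := this
      _ = n N := by field_simp
  have hb : Tendsto b atTop (nhds 0) := by
    have h1 : Tendsto (fun N => C' * Cd / n N) atTop (nhds 0) := by
      simpa [div_eq_mul_inv] using (hnt.inv_tendsto_atTop).const_mul (C' * Cd)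
    have h2 : Tendsto (fun N : ℕ => Cd / (N : ℝ)) atTop (nhds 0) := by
      simpa [div_eq_mul_inv] using hNat.inv_tendsto_atTop.const_mul Cd
    have := (h1.add h2).const_mul K
    simpa using this
  have hA0 : ∀ N, 0 ≤ A N := by
    intro N
    exact Finset.sum_nonneg fun s _ => mul_nonneg (hp N s) (abs_nonneg _)
  have key : ∀ᶠ N : ℕ in atTop, A N ≤ Real.sqrt (b N) := by
    filter_upwards [hC, hCd, eventually_ge_atTop 1] with N hCN hCdN hN1
    have hANnn := hA0 N
    simp only [hAdef]
    have hNpos : (0 : ℝ) < N := by exact_mod_cast hN1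
    have hNne : (N : ℝ) ≠ 0 := hNpos.ne'
    have hπpos : ∀ i, 0 < π N i := fun i => lt_of_lt_of_le hlam (hπlam N i)
    have hπ0 : ∀ i, π N i ≠ 0 := fun i => (hπpos i).ne'
    have hπle1 : ∀ i, π N i ≤ 1 := by
      intro i
      rw [hπ N i, ← hsum N]
      refine Finset.sum_le_sum fun s _ => ?_
      split_ifs with h
      · exact le_rfl
      · exact hp N s
    have Eii : ∀ i, ππ N i i = π N i := by
      intro i; rw [hππ N i i, hπ N i]; simp
    have hΔb : ∀ i j : Fin N, |ππ N i j - π N i * π N j|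
        ≤ C' / n N + (if i = j then (1 : ℝ) else 0) := by
      intro i j
      have ha : 0 ≤ C' / n N := div_nonneg hC'0 (hn N).le
      by_cases h : i = j
      · subst h
        rw [Eii i, if_pos rfl]
        have h1 : 0 ≤ π N i - π N i * π N i := by nlinarith [hπpos i, hπle1 i]
        rw [abs_of_nonneg h1]
        nlinarith [hπpos i, hπle1 i]
      · rw [if_neg h, add_zero, le_div_iff₀ (hn N)]
        calc |ππ N i j - π N i * π N j| * n N = n N * |ππ N i j - π N i * π N j| := mul_comm _ _
          _ ≤ C := hCN i j h
          _ ≤ C' := le_max_left _ _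
    set S : Finset (Fin N) → ℝ :=
      fun s => ∑ i : Fin N, d N i * ((if i ∈ s then 1 else 0) / π N i - 1) with hS
    have hcs : (∑ s : Finset (Fin N), p N s * |(N : ℝ)⁻¹ * S s|) ^ 2
        ≤ ∑ s : Finset (Fin N), p N s * ((N : ℝ)⁻¹ * S s) ^ 2 :=
      dlln_cs (p N) (hp N) (hsum N) _
    have hvar : ∑ s : Finset (Fin N), p N s * S s ^ 2
        = ∑ i : Fin N, ∑ j : Fin N, d N i * d N j
            * ((ππ N i j - π N i * π N j) / (π N i * π N j)) :=
      dlln_var (p N) (hsum N) (π N) (hπ N) (ππ N) (hππ N) hπ0 (d N)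
    have hcov : ∀ i j : Fin N, |(ππ N i j - π N i * π N j) / (π N i * π N j)|
        ≤ K * (C' / n N + if i = j then (1 : ℝ) else 0) := by
      intro i j
      have hden : 0 < π N i * π N j := mul_pos (hπpos i) (hπpos j)
      have hll : lam * lam ≤ π N i * π N j :=
        mul_le_mul (hπlam N i) (hπlam N j) hlam.le (hπpos i).le
      rw [abs_div, abs_of_pos hden]
      calc |ππ N i j - π N i * π N j| / (π N i * π N j)
          ≤ |ππ N i j - π N i * π N j| / (lam * lam) :=
            div_le_div_of_nonneg_left (abs_nonneg _) (by positivity) hll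
        _ = K * |ππ N i j - π N i * π N j| := by rw [div_eq_mul_inv, mul_comm]
        _ ≤ K * (C' / n N + if i = j then 1 else 0) :=
            mul_le_mul_of_nonneg_left (hΔb i j) hK0
    set Sd : ℝ := ∑ i : Fin N, d N i ^ 2 with hSd
    have hSd0 : 0 ≤ Sd := Finset.sum_nonneg fun i _ => sq_nonneg _
    have hsplit : ∑ i : Fin N, ∑ j : Fin N,
        |d N i| * |d N j| * (K * (C' / n N + if i = j then (1 : ℝ) else 0))
        = K * (C' / n N * (∑ i : Fin N, |d N i|) ^ 2 + Sd) := by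
      have h1 : ∀ i : Fin N, ∑ j : Fin N,
          |d N i| * |d N j| * (K * (C' / n N + if i = j then (1 : ℝ) else 0))
          = K * (C' / n N) * (|d N i| * ∑ j : Fin N, |d N j|) + K * d N i ^ 2 := by
        intro i
        have h2 : ∀ j : Fin N,
            |d N i| * |d N j| * (K * (C' / n N + if i = j then (1 : ℝ) else 0))
            = K * (C' / n N) * (|d N i| * |d N j|)
              + (if i = j then K * (|d N i| * |d N j|) else 0) := by
          intro j; split_ifs <;> ring
        rw [Finset.sum_congr rfl fun j _ => h2 j, Finset.sum_add_distrib,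
          Finset.sum_ite_eq, if_pos (Finset.mem_univ i), ← Finset.mul_sum,
          ← Finset.mul_sum, abs_mul_abs_self, ← sq]
      rw [Finset.sum_congr rfl fun i _ => h1 i, Finset.sum_add_distrib,
        ← Finset.mul_sum, ← Finset.mul_sum, ← Finset.sum_mul, ← hSd]
      ring
    have hsqd : (∑ i : Fin N, |d N i|) ^ 2 ≤ (N : ℝ) * Sd := by
      have h := sq_sum_le_card_mul_sum_sq (s := (Finset.univ : Finset (Fin N)))
        (f := fun i => |d N i|)
      simpa [sq_abs, hSd] using h
    have hE2 : ∑ s : Finset (Fin N), p N s * ((N : ℝ)⁻¹ * S s) ^ 2 ≤ b N := by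
      have e2 : ∑ s : Finset (Fin N), p N s * ((N : ℝ)⁻¹ * S s) ^ 2
          = ((N : ℝ)⁻¹) ^ 2 * ∑ s : Finset (Fin N), p N s * S s ^ 2 := by
        rw [Finset.mul_sum]; exact Finset.sum_congr rfl fun s _ => by ring
      rw [e2, hvar]
      have step1 : ∑ i : Fin N, ∑ j : Fin N, d N i * d N j
            * ((ππ N i j - π N i * π N j) / (π N i * π N j))
          ≤ K * (C' / n N * (∑ i : Fin N, |d N i|) ^ 2 + Sd) := by
        rw [← hsplit]
        refine Finset.sum_le_sum fun i _ => Finset.sum_le_sum fun j _ => ?_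
        calc d N i * d N j * ((ππ N i j - π N i * π N j) / (π N i * π N j))
            ≤ |d N i * d N j * ((ππ N i j - π N i * π N j) / (π N i * π N j))| :=
              le_abs_self _
          _ = |d N i| * |d N j| * |(ππ N i j - π N i * π N j) / (π N i * π N j)| := by
              rw [abs_mul, abs_mul]
          _ ≤ |d N i| * |d N j| * (K * (C' / n N + if i = j then (1 : ℝ) else 0)) :=
              mul_le_mul_of_nonneg_left (hcov i j) (by positivity)
      have ha : 0 ≤ C' / n N := div_nonneg hC'0 (hn N).le
      calc ((N : ℝ)⁻¹) ^ 2 * ∑ i : Fin N, ∑ j : Fin N, d N i * d N j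
            * ((ππ N i j - π N i * π N j) / (π N i * π N j))
          ≤ ((N : ℝ)⁻¹) ^ 2 * (K * (C' / n N * (∑ i : Fin N, |d N i|) ^ 2 + Sd)) :=
            mul_le_mul_of_nonneg_left step1 (by positivity)
        _ ≤ ((N : ℝ)⁻¹) ^ 2 * (K * (C' / n N * ((N : ℝ) * Sd) + Sd)) := by
            refine mul_le_mul_of_nonneg_left (mul_le_mul_of_nonneg_left
              (add_le_add (mul_le_mul_of_nonneg_left hsqd ha) le_rfl) hK0) (by positivity)
        _ = K * (C' / n N * ((N : ℝ)⁻¹ * Sd) + (N : ℝ)⁻¹ * ((N : ℝ)⁻¹ * Sd)) := by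
            have h3 : ((N : ℝ)⁻¹) ^ 2 * (N : ℝ) = (N : ℝ)⁻¹ := by
              rw [sq]; field_simp
            calc ((N : ℝ)⁻¹) ^ 2 * (K * (C' / n N * ((N : ℝ) * Sd) + Sd))
                = K * (C' / n N * ((((N : ℝ)⁻¹) ^ 2 * (N : ℝ)) * Sd)
                    + ((N : ℝ)⁻¹) ^ 2 * Sd) := by ring
              _ = _ := by rw [h3]; ring
        _ ≤ K * (C' / n N * Cd + (N : ℝ)⁻¹ * Cd) := by
            refine mul_le_mul_of_nonneg_left (add_le_add
              (mul_le_mul_of_nonneg_left hCdN ha)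
              (mul_le_mul_of_nonneg_left hCdN (by positivity))) hK0
        _ = b N := by
            simp only [hbdef]
            ring
    have hbnn : 0 ≤ b N := le_trans (le_trans (sq_nonneg _) hcs) hE2
    have hfin : (∑ s : Finset (Fin N), p N s * |(N : ℝ)⁻¹ * S s|) ^ 2 ≤ b N :=
      hcs.trans hE2
    have hAnn : 0 ≤ ∑ s : Finset (Fin N), p N s * |(N : ℝ)⁻¹ * S s| :=
      Finset.sum_nonneg fun s _ => mul_nonneg (hp N s) (abs_nonneg _)
    exact (Real.le_sqrt hAnn hbnn).mpr hfin
  have hsq : Tendsto (fun N => Real.sqrt (b N)) atTop (nhds 0) := by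
    have := (Real.continuous_sqrt.tendsto' 0 0 Real.sqrt_zero).comp hb
    exact this
  exact squeeze_zero' (Eventually.of_forall hA0) key hsq
end
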